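/- arXiv:2112.06744 — 7 statements merged into one kernel-verified Lean document; each statement's English description precedes it below -/
import Mathlib

section
/- Let Γ be a simplicial graph with vertex set {v_1,...,v_d}, let Λ_•(Γ*) be the associated Stanley–Reisner algebra over Z/p (the exterior algebra on the dual basis χ_1,...,χ_d modulo the ideal generated by χ_i ∧ χ_j for non-edges {v_i,v_j}), and let α = χ_1 + ... + χ_d ∈ Λ_1(Γ*). Then the dimension of the subspace Λ_1(Γ*) ∧ α of Λ_2(Γ*) equals d(Γ) − r(Γ), where d(Γ) is the number of vertices and r(Γ) is the number of connected components of Γ. -/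
/-- The degree-2 part of the Stanley–Reisner algebra `Λ₂(Γ*)` of a finite simplicial
graph `Γ` on vertices `Fin d`, modelled concretely via its canonical basis
`{χ_i ∧ χ_j : i < j, {v_i,v_j} ∈ E}` indexed by ordered edges. -/
abbrev SRdeg2 (p d : ℕ) (Γ : SimpleGraph (Fin d)) : Type :=
  {e : Fin d × Fin d // e.1 < e.2 ∧ Γ.Adj e.1 e.2} → ZMod p

/-- The wedge (cup) product `Λ₁(Γ*) × Λ₁(Γ*) → Λ₂(Γ*)`, in coordinates:
`(x ∧ y)_{ij} = x_i y_j − x_j y_i` for each edge `{v_i, v_j}`, `i < j`. -/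
def SRwedge (p d : ℕ) (Γ : SimpleGraph (Fin d)) (x y : Fin d → ZMod p) :
    SRdeg2 p d Γ :=
  fun e => x e.1.1 * y e.1.2 - x e.1.2 * y e.1.1

/-- The coboundary map `x ↦ (e ↦ x_{e₁} - x_{e₂})`. -/
def SRL (p d : ℕ) (Γ : SimpleGraph (Fin d)) :
    (Fin d → ZMod p) →ₗ[ZMod p] SRdeg2 p d Γ where
  toFun x := fun e => x e.1.1 - x e.1.2
  map_add' x y := by funext e; simp [Pi.add_apply]; ring
  map_smul' c x := by funext e; simp [smul_eq_mul]; ring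

/-- Functions on components embed as the kernel of the coboundary map. -/
def SRΦ (p d : ℕ) (Γ : SimpleGraph (Fin d)) :
    (Γ.ConnectedComponent → ZMod p) →ₗ[ZMod p] (Fin d → ZMod p) where
  toFun f := fun v => f (Γ.connectedComponentMk v)
  map_add' f g := rfl
  map_smul' c f := rfl

theorem SRΦ_ker (p d : ℕ) (Γ : SimpleGraph (Fin d)) :
    LinearMap.range (SRΦ p d Γ) = LinearMap.ker (SRL p d Γ) := by
  ext x
  constructor
  · rintro ⟨f, rfl⟩
    ext e
    have : Γ.connectedComponentMk e.1.1 = Γ.connectedComponentMk e.1.2 :=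
      SimpleGraph.ConnectedComponent.sound e.2.2.reachable
    simp [SRL, SRΦ, this]
  · intro hx
    have key : ∀ i j : Fin d, Γ.Adj i j → x i = x j := by
      intro i j hij
      have hfun := congrFun hx
      rcases lt_trichotomy i j with h | h | h
      · have := hfun ⟨(i, j), h, hij⟩
        simpa [SRL, sub_eq_zero] using this
      · exact absurd h hij.ne
      · have := hfun ⟨(j, i), h, hij.symm⟩
        have := sub_eq_zero.mp (by simpa [SRL] using this)
        exact this.symm
    have walkeq : ∀ (v w : Fin d), Γ.Walk v w → x v = x w := by
      intro v w pw
      induction pw with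
      | nil => rfl
      | cons h q ih => exact (key _ _ h).trans ih
    exact ⟨SimpleGraph.ConnectedComponent.lift x (fun v w pw _ => walkeq v w pw), rfl⟩

theorem SRΦ_inj (p d : ℕ) (Γ : SimpleGraph (Fin d)) :
    Function.Injective (SRΦ p d Γ) := by
  intro f g h
  funext c
  induction c using SimpleGraph.ConnectedComponent.ind with
  | _ v => exact congrFun h v

/-- For a finite simplicial graph `Γ` with `d` vertices and
`α = χ_1 + ⋯ + χ_d`, the subspace `Λ₁(Γ*) ∧ α` of `Λ₂(Γ*)` has dimension
`d(Γ) − r(Γ)`, where `r(Γ)` is the number of connected components of `Γ`. -/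
theorem stmt0 (p d : ℕ) [Fact p.Prime] (Γ : SimpleGraph (Fin d)) :
    Module.finrank (ZMod p)
      (Submodule.span (ZMod p)
        (Set.range fun x : Fin d → ZMod p => SRwedge p d Γ x (fun _ => 1)))
      = d - Nat.card Γ.ConnectedComponent := by
  classical
  have hfun : (fun x : Fin d → ZMod p => SRwedge p d Γ x (fun _ => 1))
      = SRL p d Γ := by
    funext x; funext e; simp [SRwedge, SRL]
  rw [hfun, ← LinearMap.coe_range, Submodule.span_eq]
  have hrn := LinearMap.finrank_range_add_finrank_ker (SRL p d Γ)
  have hdom : Module.finrank (ZMod p) (Fin d → ZMod p) = d := by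
    simp [Module.finrank_pi]
  have : Fintype Γ.ConnectedComponent := Fintype.ofFinite _
  have hker : Module.finrank (ZMod p) (LinearMap.ker (SRL p d Γ))
      = Nat.card Γ.ConnectedComponent := by
    rw [← SRΦ_ker]
    rw [LinearMap.finrank_range_of_inj (SRΦ_inj p d Γ)]
    simp [Module.finrank_pi, Nat.card_eq_fintype_card]
  omega
end

section
/- Let Γ = (V,E) be a finite simplicial graph with V = {v_1,...,v_d}, fix 1 ≤ m ≤ d, set α = χ_1 + ... + χ_m in Λ_1(Γ*), and let V_0 = Span{χ_{m+1},...,χ_d}. Let V_{0,α} = { v_j : m < j ≤ d, and {v_i,v_j} ∈ E for some 1 ≤ i ≤ m }. Then dim(V_0 ∧ α) = |V_{0,α}|, where V_0 ∧ α = { β ∧ α : β ∈ V_0 } ⊆ Λ_2(Γ*). -/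
/-- With `α = χ_1 + ⋯ + χ_m` and `V₀ = Span{χ_{m+1},…,χ_d}`,
one has `dim (V₀ ∧ α) = |V_{0,α}|`, where `V_{0,α}` is the set of vertices `v_j`
with `j > m` joined to some vertex `v_i` with `i ≤ m`. -/
theorem stmt1 (p d m : ℕ) [Fact p.Prime] (hm : 1 ≤ m) (hmd : m ≤ d)
    (Γ : SimpleGraph (Fin d))
    -- `α = χ_1 + ⋯ + χ_m` (0-indexed: coordinates `i` with `i < m`)
    (α : Fin d → ZMod p) (hα : α = fun i : Fin d => if (i : ℕ) < m then (1 : ZMod p) else 0)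
    -- `V₀ = Span{χ_{m+1},…,χ_d}`
    (V₀ : Submodule (ZMod p) (Fin d → ZMod p))
    (hV₀ : V₀ = Submodule.span (ZMod p)
      {x | ∃ j : Fin d, m ≤ (j : ℕ) ∧ x = Pi.single j 1}) :
    Module.finrank (ZMod p)
      (Submodule.span (ZMod p) {y : SRdeg2 p d Γ | ∃ x ∈ V₀, y = SRwedge p d Γ x α})
      = Nat.card {j : Fin d // m ≤ (j : ℕ) ∧ ∃ i : Fin d, (i : ℕ) < m ∧ Γ.Adj i j} := by
  classical
  -- the wedge-with-α map as a linear map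
  let W : (Fin d → ZMod p) →ₗ[ZMod p] SRdeg2 p d Γ :=
    { toFun := fun x => SRwedge p d Γ x α
      map_add' := by intro x y; funext e; simp [SRwedge]; ring
      map_smul' := by intro c x; funext e; simp [SRwedge]; ring }
  -- key pointwise computation
  have key : ∀ (j : Fin d), m ≤ (j : ℕ) →
      ∀ e : {e : Fin d × Fin d // e.1 < e.2 ∧ Γ.Adj e.1 e.2},
      W (Pi.single j 1) e =
        if e.1.2 = j ∧ (e.1.1 : ℕ) < m then -1 else 0 := by
    intro j hj e
    have hrfl : W (Pi.single j 1) e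
        = (Pi.single j (1 : ZMod p) : Fin d → ZMod p) e.1.1 * α e.1.2
          - (Pi.single j (1 : ZMod p) : Fin d → ZMod p) e.1.2 * α e.1.1 := rfl
    rw [hrfl]
    by_cases h2 : e.1.2 = j
    · have h1 : e.1.1 ≠ j := by
        intro h; exact absurd (h ▸ h2 ▸ e.2.1) (lt_irrefl _)
      by_cases hlt : (e.1.1 : ℕ) < m
      · simp [hα, Pi.single_apply, h1, h2, hlt]
      · simp [hα, Pi.single_apply, h1, h2, hlt]
    · by_cases h1 : e.1.1 = j
      · have : ¬ ((e.1.2 : ℕ) < m) := by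
          have hlt := e.2.1
          rw [h1] at hlt
          have : (j : ℕ) < (e.1.2 : ℕ) := hlt
          omega
        simp [hα, Pi.single_apply, h1, h2, this]
      · simp [Pi.single_apply, h1, h2]
  -- index type
  set J := {j : Fin d // m ≤ (j : ℕ) ∧ ∃ i : Fin d, (i : ℕ) < m ∧ Γ.Adj i j} with hJ
  let f : J → SRdeg2 p d Γ := fun j => W (Pi.single j.1 1)
  -- linear independence of f
  have li : LinearIndependent (ZMod p) f := by
    rw [Fintype.linearIndependent_iff]
    intro g hg j
    obtain ⟨i, hi, hadj⟩ := j.2.2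
    have hij : i < j.1 := by
      have : (i : ℕ) < (j.1 : ℕ) := lt_of_lt_of_le hi j.2.1
      exact this
    let e : {e : Fin d × Fin d // e.1 < e.2 ∧ Γ.Adj e.1 e.2} := ⟨(i, j.1), hij, hadj⟩
    have := congrFun hg e
    simp only [Finset.sum_apply, Pi.smul_apply, Pi.zero_apply, smul_eq_mul] at this
    have hf : ∀ j' : J, f j' e
        = if (e : Fin d × Fin d).2 = j'.1 ∧ ((e : Fin d × Fin d).1 : ℕ) < m then -1 else 0 :=
      fun j' => key j'.1 j'.2.1 e
    have hsum : ∀ j' : J, g j' * f j' e = if j' = j then -(g j) else 0 := by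
      intro j'
      rcases eq_or_ne j' j with h | h
      · subst h
        have hv : f j' e = -1 := by rw [hf j']; simp [e, hi]
        rw [hv, if_pos rfl]; ring
      · have hv : f j' e = 0 := by
          rw [hf j']
          have hne : ((e : Fin d × Fin d).2 : Fin d) ≠ j'.1 := by
            simp only [e]
            exact fun hh => h (Subtype.ext hh.symm)
          simp [hne]
        rw [hv, if_neg h]; ring
    rw [Finset.sum_congr rfl (fun j' _ => hsum j')] at this
    rw [Finset.sum_ite_eq' Finset.univ j (fun _ => -(g j))] at this
    simp at this
    exact this
  -- the span equals span of range f
  have hspan : Submodule.span (ZMod p) {y : SRdeg2 p d Γ | ∃ x ∈ V₀, y = SRwedge p d Γ x α}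
      = Submodule.span (ZMod p) (Set.range f) := by
    apply le_antisymm
    · rw [Submodule.span_le]
      rintro y ⟨x, hx, rfl⟩
      have : (SRwedge p d Γ x α : SRdeg2 p d Γ) = W x := rfl
      rw [this]
      have hx' : x ∈ Submodule.span (ZMod p)
          {x | ∃ j : Fin d, m ≤ (j : ℕ) ∧ x = Pi.single j 1} := hV₀ ▸ hx
      have : W x ∈ Submodule.map W (Submodule.span (ZMod p)
          {x | ∃ j : Fin d, m ≤ (j : ℕ) ∧ x = Pi.single j 1}) :=
        Submodule.mem_map_of_mem hx'
      rw [Submodule.map_span] at this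
      refine Submodule.span_le.mpr ?_ this
      rintro z ⟨x', ⟨j, hj, rfl⟩, rfl⟩
      by_cases hJ' : ∃ i : Fin d, (i : ℕ) < m ∧ Γ.Adj i j
      · exact Submodule.subset_span ⟨⟨j, hj, hJ'⟩, rfl⟩
      · have : W (Pi.single j 1) = 0 := by
          funext e
          rw [key j hj e]
          by_cases hc : e.1.2 = j ∧ (e.1.1 : ℕ) < m
          · exact absurd ⟨e.1.1, hc.2, hc.1 ▸ e.2.2⟩ hJ'
          · simp [hc]
        rw [this]; exact Submodule.zero_mem _
    · rw [Submodule.span_le]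
      rintro y ⟨j, rfl⟩
      apply Submodule.subset_span
      refine ⟨Pi.single j.1 1, ?_, rfl⟩
      rw [hV₀]
      exact Submodule.subset_span ⟨j.1, j.2.1, rfl⟩
  rw [hspan, finrank_span_eq_card li, Nat.card_eq_fintype_card]
end

section
/- Let Γ be a finite tree with vertex set {v_1,...,v_d}, d ≥ 1, and let α = χ_1 + ... + χ_d in the Stanley–Reisner algebra Λ_•(Γ*) over Z/p. Then for any fixed index k, the set { χ_i ∧ α : i ≠ k } is a linearly independent subset of Λ_2(Γ*) of cardinality d − 1. -/
/-- If `Γ` is a finite tree on vertices `v_1,…,v_d` and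
`α = χ_1 + ⋯ + χ_d`, then for any fixed `k` the family `{χ_i ∧ α : i ≠ k}` is a
linearly independent subset of `Λ₂(Γ*)`, of cardinality `d − 1`. -/
theorem stmt2 (p d : ℕ) [Fact p.Prime] (hd : 1 ≤ d)
    (Γ : SimpleGraph (Fin d)) (hΓ : Γ.IsTree) (k : Fin d) :
    LinearIndependent (ZMod p)
      (fun i : {i : Fin d // i ≠ k} =>
        SRwedge p d Γ (Pi.single i.1 1) (fun _ => 1)) ∧
    Nat.card {i : Fin d // i ≠ k} = d - 1 := by
  constructor
  · rw [Fintype.linearIndependent_iff]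
    intro g hg
    set c : Fin d → ZMod p := fun i => if h : i = k then 0 else g ⟨i, h⟩ with hc
    have key : ∀ a : Fin d,
        (∑ i : {i : Fin d // i ≠ k}, g i * (Pi.single (i : Fin d) (1 : ZMod p) : Fin d → ZMod p) a) = c a := by
      intro a
      by_cases ha : a = k
      · subst ha
        rw [hc]
        simp only [dif_pos]
        refine Finset.sum_eq_zero fun i _ => ?_
        rw [Pi.single_apply, if_neg (fun h => i.2 h.symm), mul_zero]
      · rw [Finset.sum_eq_single (⟨a, ha⟩ : {i : Fin d // i ≠ k})]
        · simp [hc, ha]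
        · intro j _ hj
          rw [Pi.single_apply, if_neg (fun h => hj (Subtype.ext h.symm)), mul_zero]
        · intro h; exact absurd (Finset.mem_univ _) h
    have hedge : ∀ e : {e : Fin d × Fin d // e.1 < e.2 ∧ Γ.Adj e.1 e.2},
        c e.1.1 = c e.1.2 := by
      intro e
      have h := congrFun hg e
      simp only [Finset.sum_apply, Pi.smul_apply, SRwedge, Pi.zero_apply, smul_eq_mul,
        mul_sub, mul_one] at h
      rw [Finset.sum_sub_distrib, key, key] at h
      exact sub_eq_zero.mp h
    have hadj : ∀ u v : Fin d, Γ.Adj u v → c u = c v := by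
      intro u v huv
      rcases lt_trichotomy u v with h | h | h
      · exact hedge ⟨(u, v), h, huv⟩
      · exact absurd h (Γ.ne_of_adj huv)
      · exact (hedge ⟨(v, u), h, huv.symm⟩).symm
    have hwalk : ∀ {u v : Fin d}, Γ.Walk u v → c u = c v := by
      intro u v w
      induction w with
      | nil => rfl
      | cons h _ ih => exact (hadj _ _ h).trans ih
    have hzero : ∀ v : Fin d, c v = 0 := by
      intro v
      obtain ⟨w⟩ := hΓ.isConnected.preconnected v k
      rw [hwalk w, hc]
      simp
    intro i
    have := hzero i.1
    rw [hc] at this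
    simpa [dif_neg i.2] using this
  · rw [Nat.card_eq_fintype_card, Fintype.card_subtype_compl, Fintype.card_subtype_eq,
      Fintype.card_fin]
end

section
/- Let G_Γ be the pro-p RAAG associated to a finite simplicial graph Γ = (V,E), and let α_1,...,α_n (n ≥ 2) be homomorphisms G_Γ → Z/p such that for each h = 1,...,n−1 and each edge {v_l,v_{l'}} ∈ E one has α_h(v_l)α_{h+1}(v_{l'}) − α_h(v_{l'})α_{h+1}(v_l) = 0. Then there exists a continuous homomorphism ρ: G_Γ → U_{n+1}(Z/p) into the group of unipotent upper-triangular (n+1)×(n+1) matrices over Z/p such that the (i,i+1) entry of ρ equals α_i for every i = 1,...,n. -/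
/-- The right-angled Artin group of a finite simplicial graph `Γ`, presented by the
vertices with commuting relations along the edges.  Since the target group
`U_{n+1}(ℤ/p)` below is a finite `p`-group, continuous homomorphisms from the pro-`p`
completion `G_Γ` correspond exactly to (abstract) homomorphisms from this discrete
right-angled Artin group, so the statement about `G_Γ` is formalized via it. -/
def RAAG {d : ℕ} (Γ : SimpleGraph (Fin d)) : Type :=
  PresentedGroup {r : FreeGroup (Fin d) |
    ∃ i j : Fin d, Γ.Adj i j ∧
      r = FreeGroup.of i * FreeGroup.of j * (FreeGroup.of i)⁻¹ * (FreeGroup.of j)⁻¹}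

instance {d : ℕ} (Γ : SimpleGraph (Fin d)) : Group (RAAG Γ) := by
  unfold RAAG; infer_instance

/-- The generator of `RAAG Γ` corresponding to a vertex. -/
def RAAG.of {d : ℕ} (Γ : SimpleGraph (Fin d)) (i : Fin d) : RAAG Γ :=
  PresentedGroup.of (rels := {r : FreeGroup (Fin d) |
    ∃ i j : Fin d, Γ.Adj i j ∧
      r = FreeGroup.of i * FreeGroup.of j * (FreeGroup.of i)⁻¹ * (FreeGroup.of j)⁻¹}) i

open Matrix Finset

section Aux

variable {p n : ℕ}

/-- strictly upper triangular -/
def sUT (X : Matrix (Fin (n+1)) (Fin (n+1)) (ZMod p)) : Prop :=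
  ∀ i j : Fin (n+1), (j:ℕ) ≤ (i:ℕ) → X i j = 0

lemma sUT_pow_entry {X : Matrix (Fin (n+1)) (Fin (n+1)) (ZMod p)} (hX : sUT X) :
    ∀ (k : ℕ) (i j : Fin (n+1)), (j:ℕ) < (i:ℕ) + k → (X^k) i j = 0 := by
  intro k
  induction k with
  | zero =>
    intro i j hij
    rw [pow_zero]
    exact Matrix.one_apply_ne (by intro h; subst h; omega)
  | succ k ih =>
    intro i j hij
    rw [pow_succ, Matrix.mul_apply]
    apply Finset.sum_eq_zero
    intro t _
    by_cases ht : (t:ℕ) < (i:ℕ) + k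
    · rw [ih i t ht, zero_mul]
    · rw [hX t j (by omega), mul_zero]

lemma sUT_nilpotent {X : Matrix (Fin (n+1)) (Fin (n+1)) (ZMod p)} (hX : sUT X) :
    X^(n+1) = 0 := by
  ext i j
  rw [Matrix.zero_apply]
  exact sUT_pow_entry hX (n+1) i j (by omega)

lemma sUT_neg {X : Matrix (Fin (n+1)) (Fin (n+1)) (ZMod p)} (hX : sUT X) : sUT (-X) := by
  intro i j h
  simp [hX i j h]

lemma sUT_inv_pair {X : Matrix (Fin (n+1)) (Fin (n+1)) (ZMod p)} (hX : sUT X) :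
    (∑ k ∈ Finset.range (n+1), (-X)^k) * (1 + X) = 1 := by
  have hnil : (-X)^(n+1) = 0 := sUT_nilpotent (sUT_neg hX)
  have h1 : (1 + X) = -((-X) - 1) := by rw [neg_sub, sub_neg_eq_add]
  rw [h1, mul_neg, geom_sum_mul, hnil]
  simp

/-- unipotent upper triangular -/
def UnipM (A : Matrix (Fin (n+1)) (Fin (n+1)) (ZMod p)) : Prop :=
  (∀ i j : Fin (n+1), (j:ℕ) < (i:ℕ) → A i j = 0) ∧ ∀ i, A i i = 1

lemma UnipM.one : UnipM (1 : Matrix (Fin (n+1)) (Fin (n+1)) (ZMod p)) := by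
  constructor
  · intro i j h
    exact Matrix.one_apply_ne (by intro hh; subst hh; omega)
  · intro i; simp

lemma UnipM.mul {A B : Matrix (Fin (n+1)) (Fin (n+1)) (ZMod p)}
    (hA : UnipM A) (hB : UnipM B) : UnipM (A * B) := by
  constructor
  · intro i j hij
    rw [Matrix.mul_apply]
    apply Finset.sum_eq_zero
    intro t _
    by_cases ht : (t:ℕ) < (i:ℕ)
    · rw [hA.1 i t ht, zero_mul]
    · rw [hB.1 t j (by omega), mul_zero]
  · intro i
    rw [Matrix.mul_apply]
    rw [Finset.sum_eq_single i]
    · rw [hA.2, hB.2, one_mul]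
    · intro t _ ht
      have ht' : (t:ℕ) ≠ (i:ℕ) := fun h => ht (Fin.ext h)
      by_cases h : (t:ℕ) < (i:ℕ)
      · rw [hA.1 i t h, zero_mul]
      · rw [hB.1 t i (by omega), mul_zero]
    · simp

lemma UnipM_geomsum {X : Matrix (Fin (n+1)) (Fin (n+1)) (ZMod p)} (hX : sUT X) :
    UnipM (∑ k ∈ Finset.range (n+1), X^k) := by
  constructor
  · intro i j hij
    rw [Matrix.sum_apply]
    apply Finset.sum_eq_zero
    intro k _
    exact sUT_pow_entry hX k i j (by omega)
  · intro i
    rw [Matrix.sum_apply]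
    rw [Finset.sum_eq_single 0]
    · simp [Matrix.one_apply_eq]
    · intro k _ hk
      exact sUT_pow_entry hX k i i (by omega)
    · simp

lemma UnipM.sub_one_sUT {A : Matrix (Fin (n+1)) (Fin (n+1)) (ZMod p)} (hA : UnipM A) :
    sUT (-(A - 1)) := by
  apply sUT_neg
  intro i j hij
  rcases eq_or_lt_of_le hij with h | h
  · have : j = i := Fin.ext h
    subst this
    simp [hA.2]
  · simp [hA.1 i j h, Matrix.one_apply_ne (show i ≠ j by intro hh; subst hh; omega)]

/-- the subgroup of unipotent upper triangular units -/
def uniGroup (p n : ℕ) : Subgroup (Matrix (Fin (n+1)) (Fin (n+1)) (ZMod p))ˣ where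
  carrier := {u | UnipM (u : Matrix (Fin (n+1)) (Fin (n+1)) (ZMod p))}
  one_mem' := by simpa using UnipM.one
  mul_mem' := by
    intro a b ha hb
    simpa [Units.val_mul] using ha.mul hb
  inv_mem' := by
    intro u hu
    have hX : sUT (-((u : Matrix (Fin (n+1)) (Fin (n+1)) (ZMod p)) - 1)) := hu.sub_one_sUT
    set X := -((u : Matrix (Fin (n+1)) (Fin (n+1)) (ZMod p)) - 1) with hXdef
    have hu1 : (u : Matrix (Fin (n+1)) (Fin (n+1)) (ZMod p)) = 1 + (-X) := by
      rw [hXdef, neg_neg]; abel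
    have hpair : (∑ k ∈ Finset.range (n+1), X^k) * (u : Matrix (Fin (n+1)) (Fin (n+1)) (ZMod p)) = 1 := by
      rw [hu1]
      simpa using sUT_inv_pair (sUT_neg hX)
    have hinv : ((u⁻¹ : _ˣ) : Matrix (Fin (n+1)) (Fin (n+1)) (ZMod p)) =
        ∑ k ∈ Finset.range (n+1), X^k := by
      calc ((u⁻¹ : _ˣ) : Matrix (Fin (n+1)) (Fin (n+1)) (ZMod p))
          = 1 * ((u⁻¹ : _ˣ) : Matrix (Fin (n+1)) (Fin (n+1)) (ZMod p)) := (one_mul _).symm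
        _ = (∑ k ∈ Finset.range (n+1), X^k) *
              ((u : Matrix (Fin (n+1)) (Fin (n+1)) (ZMod p)) *
               ((u⁻¹ : _ˣ) : Matrix (Fin (n+1)) (Fin (n+1)) (ZMod p))) := by
            rw [← hpair, mul_assoc]
        _ = ∑ k ∈ Finset.range (n+1), X^k := by
            rw [← Units.val_mul, mul_inv_cancel, Units.val_one, mul_one]
    show UnipM _
    rw [hinv]
    exact UnipM_geomsum hX

end Aux

section Aux2
variable {p n : ℕ}

/-- the strictly-triangular matrix with superdiagonal `c` -/
def Nmat (p n : ℕ) (c : Fin n → ZMod p) : Matrix (Fin (n+1)) (Fin (n+1)) (ZMod p) :=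
  Matrix.of fun i j => if h : (i:ℕ) < n ∧ (j:ℕ) = (i:ℕ)+1 then c ⟨i, h.1⟩ else 0

lemma Nmat_apply (c : Fin n → ZMod p) (i j : Fin (n+1)) :
    Nmat p n c i j = if h : (i:ℕ) < n ∧ (j:ℕ) = (i:ℕ)+1 then c ⟨i, h.1⟩ else 0 := rfl

lemma sUT_Nmat (c : Fin n → ZMod p) : sUT (Nmat p n c) := by
  intro i j hij
  rw [Nmat_apply, dif_neg]
  rintro ⟨h1, h2⟩
  omega

lemma Nmat_mul_apply (a b : Fin n → ZMod p) (i j : Fin (n+1)) :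
    (Nmat p n a * Nmat p n b) i j =
      if h : (i:ℕ)+1 < n ∧ (j:ℕ) = (i:ℕ)+2 then
        a ⟨i, by omega⟩ * b ⟨(i:ℕ)+1, h.1⟩ else 0 := by
  rw [Matrix.mul_apply]
  by_cases h : (i:ℕ)+1 < n ∧ (j:ℕ) = (i:ℕ)+2
  · rw [dif_pos h]
    rw [Finset.sum_eq_single (⟨(i:ℕ)+1, by omega⟩ : Fin (n+1))]
    · rw [Nmat_apply, Nmat_apply, dif_pos ⟨by omega, rfl⟩, dif_pos ⟨by simpa using h.1, by simp; omega⟩]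
    · intro t _ ht
      rw [Nmat_apply, dif_neg, zero_mul]
      rintro ⟨h1, h2⟩
      exact ht (Fin.ext h2)
    · simp
  · rw [dif_neg h]
    apply Finset.sum_eq_zero
    intro t _
    by_cases h1 : (i:ℕ) < n ∧ (t:ℕ) = (i:ℕ)+1
    · have : Nmat p n b t j = 0 := by
        rw [Nmat_apply, dif_neg]
        rintro ⟨ht, hj⟩
        exact h ⟨by omega, by omega⟩
      rw [this, mul_zero]
    · rw [Nmat_apply, dif_neg h1, zero_mul]

lemma Nmat_commute (a b : Fin n → ZMod p)
    (hc : ∀ (h : ℕ) (hh : h + 1 < n),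
      a ⟨h, by omega⟩ * b ⟨h+1, hh⟩ = b ⟨h, by omega⟩ * a ⟨h+1, hh⟩) :
    Nmat p n a * Nmat p n b = Nmat p n b * Nmat p n a := by
  ext i j
  rw [Nmat_mul_apply, Nmat_mul_apply]
  by_cases h : (i:ℕ)+1 < n ∧ (j:ℕ) = (i:ℕ)+2
  · rw [dif_pos h, dif_pos h]
    exact hc i h.1
  · rw [dif_neg h, dif_neg h]

lemma superdiag_mul {A B : Matrix (Fin (n+1)) (Fin (n+1)) (ZMod p)}
    (hA : UnipM A) (hB : UnipM B) (i : Fin n) :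
    (A * B) i.castSucc i.succ = A i.castSucc i.succ + B i.castSucc i.succ := by
  rw [Matrix.mul_apply]
  have hne : (i.castSucc : Fin (n+1)) ≠ i.succ := by
    intro h
    have := congrArg Fin.val h
    simp at this
  rw [← Finset.sum_subset (Finset.subset_univ {i.castSucc, i.succ})]
  · rw [Finset.sum_pair hne]
    rw [hA.2, hB.2, one_mul, mul_one]
    ring
  · intro t _ ht
    simp only [Finset.mem_insert, Finset.mem_singleton, not_or] at ht
    have h1 : (t:ℕ) ≠ (i:ℕ) := fun h => ht.1 (Fin.ext (by simpa using h.symm)).symm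
    have h2 : (t:ℕ) ≠ (i:ℕ)+1 := fun h => ht.2 (Fin.ext (by simpa using h.symm)).symm
    by_cases h : (t:ℕ) < (i:ℕ)
    · rw [hA.1 i.castSucc t (by simpa using h), zero_mul]
    · rw [hB.1 t i.succ (by simp; omega), mul_zero]

end Aux2

section Aux3
variable {p n : ℕ}

lemma UnipM_one_add {X : Matrix (Fin (n+1)) (Fin (n+1)) (ZMod p)} (hX : sUT X) :
    UnipM (1 + X) := by
  constructor
  · intro i j hij
    rw [Matrix.add_apply, hX i j (by omega),
      Matrix.one_apply_ne (by intro h; subst h; omega), add_zero]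
  · intro i
    rw [Matrix.add_apply, hX i i le_rfl, Matrix.one_apply_eq, add_zero]

/-- the unit `1 + X` for `X` strictly upper triangular -/
def unipUnit {X : Matrix (Fin (n+1)) (Fin (n+1)) (ZMod p)} (hX : sUT X) :
    (Matrix (Fin (n+1)) (Fin (n+1)) (ZMod p))ˣ where
  val := 1 + X
  inv := ∑ k ∈ Finset.range (n+1), (-X)^k
  val_inv := mul_eq_one_comm.mpr (sUT_inv_pair hX)
  inv_val := sUT_inv_pair hX

lemma unipUnit_mem {X : Matrix (Fin (n+1)) (Fin (n+1)) (ZMod p)} (hX : sUT X) :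
    unipUnit hX ∈ uniGroup p n := UnipM_one_add hX

end Aux3

/-- Let `G_Γ` be the (pro-`p`) RAAG of a finite simplicial graph and
let `α_1,…,α_n : G_Γ → ℤ/p` (`n ≥ 2`) be homomorphisms such that for each
`h = 1,…,n−1` and each edge `{v_l, v_{l'}}` one has
`α_h(v_l)α_{h+1}(v_{l'}) − α_h(v_{l'})α_{h+1}(v_l) = 0`.  Then there is a
homomorphism `ρ : G_Γ → U_{n+1}(ℤ/p)` into the unipotent upper-triangular matrices
whose `(i,i+1)` entry is `α_i` for `i = 1,…,n`. -/
theorem stmt3 (p d n : ℕ) [Fact p.Prime] (hn : 2 ≤ n) (Γ : SimpleGraph (Fin d))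
    (α : Fin n → (RAAG Γ →* Multiplicative (ZMod p)))
    (hcup : ∀ h h' : Fin n, (h' : ℕ) = (h : ℕ) + 1 →
      ∀ l l' : Fin d, Γ.Adj l l' →
        Multiplicative.toAdd (α h (RAAG.of Γ l)) *
          Multiplicative.toAdd (α h' (RAAG.of Γ l')) -
        Multiplicative.toAdd (α h (RAAG.of Γ l')) *
          Multiplicative.toAdd (α h' (RAAG.of Γ l)) = 0) :
    ∃ ρ : RAAG Γ →* Matrix (Fin (n + 1)) (Fin (n + 1)) (ZMod p),
      (∀ g i j, j < i → ρ g i j = 0) ∧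
      (∀ g i, ρ g i i = 1) ∧
      (∀ (i : Fin n) (g : RAAG Γ),
        ρ g i.castSucc i.succ = Multiplicative.toAdd (α i g)) := by
  classical
  -- superdiagonal data of each generator
  set a : Fin d → Fin n → ZMod p :=
    fun l k => Multiplicative.toAdd (α k (RAAG.of Γ l)) with ha
  -- generator images
  let f : Fin d → uniGroup p n :=
    fun l => ⟨unipUnit (sUT_Nmat (a l)), unipUnit_mem (sUT_Nmat (a l))⟩
  have hcomm : ∀ l l' : Fin d, Γ.Adj l l' → f l * f l' = f l' * f l := by
    intro l l' hadj
    apply Subtype.ext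
    apply Units.ext
    show (1 + Nmat p n (a l)) * (1 + Nmat p n (a l')) =
      (1 + Nmat p n (a l')) * (1 + Nmat p n (a l))
    have h := Nmat_commute (a l) (a l') (by
      intro h hh
      have := hcup ⟨h, by omega⟩ ⟨h+1, hh⟩ rfl l l' hadj
      have := sub_eq_zero.mp this
      exact this)
    simp only [mul_add, add_mul, one_mul, mul_one]
    rw [h]
    abel
  have hrel : ∀ r ∈ {r : FreeGroup (Fin d) |
      ∃ i j : Fin d, Γ.Adj i j ∧
        r = FreeGroup.of i * FreeGroup.of j * (FreeGroup.of i)⁻¹ * (FreeGroup.of j)⁻¹},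
      FreeGroup.lift f r = 1 := by
    rintro r ⟨l, l', hadj, rfl⟩
    simp only [_root_.map_mul, _root_.map_inv, FreeGroup.lift_apply_of]
    rw [hcomm l l' hadj]
    group
  let φ : RAAG Γ →* uniGroup p n := PresentedGroup.toGroup hrel
  refine ⟨((Units.coeHom _).comp (uniGroup p n).subtype).comp φ, ?_, ?_, ?_⟩
  · intro g i j hij
    exact (φ g).2.1 i j hij
  · intro g i
    exact (φ g).2.2 i
  · intro i g
    -- the superdiagonal-entry homomorphism
    let E : uniGroup p n →* Multiplicative (ZMod p) :=
      { toFun := fun u =>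
          Multiplicative.ofAdd
            (((u : (Matrix (Fin (n+1)) (Fin (n+1)) (ZMod p))ˣ) :
              Matrix (Fin (n+1)) (Fin (n+1)) (ZMod p)) i.castSucc i.succ)
        map_one' := by
          have hne : (i.castSucc : Fin (n+1)) ≠ i.succ := by
            intro h
            have := congrArg Fin.val h
            simp at this
          simp [Matrix.one_apply_ne hne]
        map_mul' := by
          intro u v
          have := superdiag_mul u.2 v.2 i
          simp only [Subgroup.coe_mul, Units.val_mul] at *
          rw [this]
          rfl }
    have heq : E.comp φ = α i := by
      apply PresentedGroup.ext
      intro l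
      have h1 : φ (PresentedGroup.of l) = f l := PresentedGroup.toGroup.of hrel
      show E (φ (PresentedGroup.of l)) = α i (RAAG.of Γ l)
      rw [h1]
      show Multiplicative.ofAdd ((1 + Nmat p n (a l)) i.castSucc i.succ) = α i (RAAG.of Γ l)
      have hne : (i.castSucc : Fin (n+1)) ≠ i.succ := by
        intro h
        have := congrArg Fin.val h
        simp at this
      have h2 : (1 + Nmat p n (a l)) i.castSucc i.succ = a l i := by
        rw [Matrix.add_apply, Matrix.one_apply_ne hne, Nmat_apply,
          dif_pos ⟨by simp [i.isLt], by simp⟩, zero_add]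
        congr 1
      rw [h2]
      rfl
    have := congrArg (fun (ψ : RAAG Γ →* Multiplicative (ZMod p)) => Multiplicative.toAdd (ψ g)) heq
    exact this
end

section
/- Let Γ' be an induced subgraph of the graph Q_n (a row of n squares), and let q(Γ') denote the number of distinct induced subgraphs of Γ' isomorphic to a 4-cycle (subsquares). Then |E(Γ')| − d(Γ') + r(Γ') = q(Γ'), where d(Γ') is the number of vertices and r(Γ') the number of connected components of Γ'. -/
/-- The ladder graph `Q_n` (a row of `n` squares): vertices `v_1, …, v_{2(n+1)}`
(0-indexed here), with edges `{v_{2i−1}, v_{2i+1}}`, `{v_{2i}, v_{2i+2}}` for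
`1 ≤ i ≤ n` and rungs `{v_{2i−1}, v_{2i}}` for `1 ≤ i ≤ n+1`. -/
def ladderGraph (n : ℕ) : SimpleGraph (Fin (2 * (n + 1))) :=
  SimpleGraph.fromRel (fun a b =>
    (∃ i, 1 ≤ i ∧ i ≤ n ∧
      (((a : ℕ) = 2 * i - 2 ∧ (b : ℕ) = 2 * i) ∨
       ((a : ℕ) = 2 * i - 1 ∧ (b : ℕ) = 2 * i + 1))) ∨
    (∃ i, 1 ≤ i ∧ i ≤ n + 1 ∧ (a : ℕ) = 2 * i - 2 ∧ (b : ℕ) = 2 * i - 1))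

set_option linter.unusedSectionVars false
set_option linter.unusedVariables false


open SimpleGraph

variable {V : Type*} [Finite V] {G : SimpleGraph V}


lemma ladder_adj {n : ℕ} {a b : Fin (2 * (n + 1))} :
    (ladderGraph n).Adj a b ↔
      ((a : ℕ) + 2 = b ∨ (b : ℕ) + 2 = a) ∨
      ((a : ℕ) + 1 = b ∧ Even (a : ℕ)) ∨ ((b : ℕ) + 1 = a ∧ Even (b : ℕ)) := by
  have ha := a.isLt
  have hb := b.isLt
  rw [ladderGraph, SimpleGraph.fromRel_adj]
  constructor
  · rintro ⟨hne, (⟨i, h1, h2, (⟨h3, h4⟩ | ⟨h3, h4⟩)⟩ | ⟨i, h1, h2, h3, h4⟩) |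
      (⟨i, h1, h2, (⟨h3, h4⟩ | ⟨h3, h4⟩)⟩ | ⟨i, h1, h2, h3, h4⟩)⟩
    · left; left; omega
    · left; left; omega
    · right; left; constructor; omega; exact ⟨i - 1, by omega⟩
    · left; right; omega
    · left; right; omega
    · right; right; constructor; omega; exact ⟨i - 1, by omega⟩
  · rintro ((h | h) | (⟨h, j, hj⟩ | ⟨h, j, hj⟩))
    · refine ⟨by omega, ?_⟩
      rcases Nat.even_or_odd (a : ℕ) with he | ho
      · obtain ⟨j, hj⟩ := he
        exact Or.inl (Or.inl ⟨j + 1, by omega, by omega, Or.inl ⟨by omega, by omega⟩⟩)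
      · obtain ⟨j, hj⟩ := ho
        exact Or.inl (Or.inl ⟨j + 1, by omega, by omega, Or.inr ⟨by omega, by omega⟩⟩)
    · refine ⟨by omega, ?_⟩
      rcases Nat.even_or_odd (b : ℕ) with he | ho
      · obtain ⟨j, hj⟩ := he
        exact Or.inr (Or.inl ⟨j + 1, by omega, by omega, Or.inl ⟨by omega, by omega⟩⟩)
      · obtain ⟨j, hj⟩ := ho
        exact Or.inr (Or.inl ⟨j + 1, by omega, by omega, Or.inr ⟨by omega, by omega⟩⟩)
    · exact ⟨by omega, Or.inl (Or.inr ⟨j + 1, by omega, by omega, by omega, by omega⟩)⟩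
    · exact ⟨by omega, Or.inr (Or.inr ⟨j + 1, by omega, by omega, by omega, by omega⟩)⟩


lemma ladder_adj' {n : ℕ} {a b : Fin (2 * (n + 1))} :
    (ladderGraph n).Adj a b ↔
      ((a : ℕ) + 2 = b ∨ (b : ℕ) + 2 = a) ∨
      ((a : ℕ) + 1 = b ∧ (a : ℕ) % 2 = 0) ∨ ((b : ℕ) + 1 = a ∧ (b : ℕ) % 2 = 0) := by
  rw [ladder_adj, Nat.even_iff, Nat.even_iff]

lemma c4_facts (β : Fin 4) :
    (SimpleGraph.cycleGraph 4).Adj β (β + 1) ∧ (SimpleGraph.cycleGraph 4).Adj β (β - 1) ∧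
    (SimpleGraph.cycleGraph 4).Adj (β + 2) (β + 1) ∧ (SimpleGraph.cycleGraph 4).Adj (β + 2) (β - 1) ∧
    β + 1 ≠ β - 1 ∧ β + 2 ≠ β := by revert β; decide

lemma c4_cover (β γ : Fin 4) : γ = β ∨ γ = β + 1 ∨ γ = β + 2 ∨ γ = β - 1 := by
  revert β γ; decide

lemma classify_odd {n k : ℕ} {T : Set (Fin (2 * (n + 1)))}
    (hT : ∀ x ∈ T, (x : ℕ) < 2 * k + 2) {bv : Fin (2 * (n + 1))}
    (hbval : (bv : ℕ) = 2 * k + 1) (hbT : bv ∈ T)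
    (e : (ladderGraph n).induce T ≃g cycleGraph 4) :
    1 ≤ k ∧ (∀ x ∈ T, (x : ℕ) + 2 = 2 * k ∨ (x : ℕ) + 1 = 2 * k ∨ (x : ℕ) = 2 * k
        ∨ (x : ℕ) = 2 * k + 1)
      ∧ (∀ x : Fin (2 * (n + 1)), ((x : ℕ) + 2 = 2 * k ∨ (x : ℕ) + 1 = 2 * k ∨ (x : ℕ) = 2 * k
        ∨ (x : ℕ) = 2 * k + 1) → x ∈ T) := by
  set p : ↥T := ⟨bv, hbT⟩ with hp
  set β := e p with hβ
  set x₁ := e.symm (β + 1) with hx₁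
  set x₂ := e.symm (β - 1) with hx₂
  set w := e.symm (β + 2) with hw
  obtain ⟨c1, c2, c3, c4, c5, c6⟩ := c4_facts β
  have hadj1 : (ladderGraph n).Adj bv x₁ := by
    have : ((ladderGraph n).induce T).Adj p x₁ := by
      rw [← e.map_rel_iff, RelIso.apply_symm_apply]; exact c1
    exact this
  have hadj2 : (ladderGraph n).Adj bv x₂ := by
    have : ((ladderGraph n).induce T).Adj p x₂ := by
      rw [← e.map_rel_iff, RelIso.apply_symm_apply]; exact c2
    exact this
  have hadjw1 : (ladderGraph n).Adj ↑w ↑x₁ := by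
    have : ((ladderGraph n).induce T).Adj w x₁ := by
      rw [← e.map_rel_iff, RelIso.apply_symm_apply, RelIso.apply_symm_apply]; exact c3
    exact this
  have hadjw2 : (ladderGraph n).Adj ↑w ↑x₂ := by
    have : ((ladderGraph n).induce T).Adj w x₂ := by
      rw [← e.map_rel_iff, RelIso.apply_symm_apply, RelIso.apply_symm_apply]; exact c4
    exact this
  have hne12 : x₁ ≠ x₂ := fun hc => c5 (e.symm.injective hc)
  have hnewp : w ≠ p := fun hc => c6 (by
    apply_fun e at hc
    rwa [RelIso.apply_symm_apply] at hc)
  have hne12' : (↑x₁ : ℕ) ≠ (↑x₂ : ℕ) := fun hc => hne12 (Subtype.ext (Fin.ext hc))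
  have hnewp' : (↑w : ℕ) ≠ (bv : ℕ) := fun hc => hnewp (Subtype.ext (Fin.ext hc))
  -- values of x₁, x₂
  have hv1 : (↑x₁ : ℕ) + 2 = 2 * k + 1 ∨ (↑x₁ : ℕ) = 2 * k := by
    have hb := hT _ (x₁ : ↥T).2
    rw [ladder_adj'] at hadj1; omega
  have hv2 : (↑x₂ : ℕ) + 2 = 2 * k + 1 ∨ (↑x₂ : ℕ) = 2 * k := by
    have hb := hT _ (x₂ : ↥T).2
    rw [ladder_adj'] at hadj2; omega
  have hk1 : 1 ≤ k := by omega
  -- w's value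
  have hvw : (↑w : ℕ) + 2 = 2 * k := by
    have hbw := hT _ (w : ↥T).2
    have hb1 := hT _ (x₁ : ↥T).2
    rw [ladder_adj'] at hadjw1 hadjw2; omega
  refine ⟨hk1, ?_, ?_⟩
  · intro x hxT
    obtain hc | hc | hc | hc := c4_cover β (e ⟨x, hxT⟩)
    · have : (⟨x, hxT⟩ : ↥T) = p := e.injective (by rw [hc])
      have hval : (x : ℕ) = ((p : Fin (2*(n+1))) : ℕ) :=
        congrArg Fin.val (Subtype.ext_iff.mp this)
      simp only [hp] at hval
      omega
    · have : (⟨x, hxT⟩ : ↥T) = x₁ := by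
        apply e.injective; rw [hc, hx₁, RelIso.apply_symm_apply]
      have hval : (x : ℕ) = ((x₁ : ↥T) : Fin (2*(n+1))).val :=
        congrArg Fin.val (Subtype.ext_iff.mp this)
      omega
    · have : (⟨x, hxT⟩ : ↥T) = w := by
        apply e.injective; rw [hc, hw, RelIso.apply_symm_apply]
      have hval : (x : ℕ) = ((w : ↥T) : Fin (2*(n+1))).val :=
        congrArg Fin.val (Subtype.ext_iff.mp this)
      omega
    · have : (⟨x, hxT⟩ : ↥T) = x₂ := by
        apply e.injective; rw [hc, hx₂, RelIso.apply_symm_apply]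
      have hval : (x : ℕ) = ((x₂ : ↥T) : Fin (2*(n+1))).val :=
        congrArg Fin.val (Subtype.ext_iff.mp this)
      omega
  · intro x hx
    obtain hc | hc | hc | hc := hx
    · have : x = ↑w := Fin.ext (by omega)
      rw [this]; exact (w : ↥T).2
    · rcases hv1 with h1 | h1
      · have : x = ↑x₁ := Fin.ext (by omega)
        rw [this]; exact (x₁ : ↥T).2
      · rcases hv2 with h2 | h2
        · have : x = ↑x₂ := Fin.ext (by omega)
          rw [this]; exact (x₂ : ↥T).2
        · omega
    · rcases hv1 with h1 | h1
      · rcases hv2 with h2 | h2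
        · omega
        · have : x = ↑x₂ := Fin.ext (by omega)
          rw [this]; exact (x₂ : ↥T).2
      · have : x = ↑x₁ := Fin.ext (by omega)
        rw [this]; exact (x₁ : ↥T).2
    · have : x = bv := Fin.ext (by omega)
      rw [this]; exact hbT

lemma classify_even {n k : ℕ} {T : Set (Fin (2 * (n + 1)))}
    (hT : ∀ x ∈ T, (x : ℕ) < 2 * k + 2) {av : Fin (2 * (n + 1))}
    (haval : (av : ℕ) = 2 * k) (haT : av ∈ T)
    (e : (ladderGraph n).induce T ≃g cycleGraph 4) :
    (∃ x ∈ T, (x : ℕ) = 2 * k + 1) ∧ (∃ x ∈ T, (x : ℕ) + 2 = 2 * k) := by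
  set p : ↥T := ⟨av, haT⟩ with hp
  set β := e p with hβ
  set x₁ := e.symm (β + 1) with hx₁
  set x₂ := e.symm (β - 1) with hx₂
  obtain ⟨c1, c2, -, -, c5, -⟩ := c4_facts β
  have hadj1 : (ladderGraph n).Adj av x₁ := by
    have : ((ladderGraph n).induce T).Adj p x₁ := by
      rw [← e.map_rel_iff, RelIso.apply_symm_apply]; exact c1
    exact this
  have hadj2 : (ladderGraph n).Adj av x₂ := by
    have : ((ladderGraph n).induce T).Adj p x₂ := by
      rw [← e.map_rel_iff, RelIso.apply_symm_apply]; exact c2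
    exact this
  have hne12' : (↑x₁ : ℕ) ≠ (↑x₂ : ℕ) :=
    fun hc => c5 (e.symm.injective (Subtype.ext (Fin.ext hc)))
  have hv1 : (↑x₁ : ℕ) + 2 = 2 * k ∨ (↑x₁ : ℕ) = 2 * k + 1 := by
    have hb := hT _ (x₁ : ↥T).2
    rw [ladder_adj'] at hadj1; omega
  have hv2 : (↑x₂ : ℕ) + 2 = 2 * k ∨ (↑x₂ : ℕ) = 2 * k + 1 := by
    have hb := hT _ (x₂ : ↥T).2
    rw [ladder_adj'] at hadj2; omega
  rcases hv1 with h1 | h1 <;> rcases hv2 with h2 | h2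
  · omega
  · exact ⟨⟨x₂, (x₂ : ↥T).2, h2⟩, ⟨x₁, (x₁ : ↥T).2, h1⟩⟩
  · exact ⟨⟨x₁, (x₁ : ↥T).2, h1⟩, ⟨x₂, (x₂ : ↥T).2, h2⟩⟩
  · omega

lemma square_iso {n k : ℕ} (hk1 : 1 ≤ k) (hkn : k ≤ n) :
    Nonempty ((ladderGraph n).induce
      {x : Fin (2 * (n + 1)) | (x : ℕ) + 2 = 2 * k ∨ (x : ℕ) + 1 = 2 * k ∨ (x : ℕ) = 2 * k
        ∨ (x : ℕ) = 2 * k + 1} ≃g cycleGraph 4) := by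
  set T₀ : Set (Fin (2 * (n + 1))) :=
    {x | (x : ℕ) + 2 = 2 * k ∨ (x : ℕ) + 1 = 2 * k ∨ (x : ℕ) = 2 * k ∨ (x : ℕ) = 2 * k + 1}
    with hT₀
  have hb0 : 2 * k - 2 < 2 * (n + 1) := by omega
  have hb1 : 2 * k - 1 < 2 * (n + 1) := by omega
  have hb2 : 2 * k + 1 < 2 * (n + 1) := by omega
  have hb3 : 2 * k < 2 * (n + 1) := by omega
  let A : ↥T₀ := ⟨⟨2 * k - 2, hb0⟩, Or.inl (show 2 * k - 2 + 2 = 2 * k by omega)⟩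
  let B : ↥T₀ := ⟨⟨2 * k - 1, hb1⟩, Or.inr (Or.inl (show 2 * k - 1 + 1 = 2 * k by omega))⟩
  let C : ↥T₀ := ⟨⟨2 * k + 1, hb2⟩, Or.inr (Or.inr (Or.inr rfl))⟩
  let D : ↥T₀ := ⟨⟨2 * k, hb3⟩, Or.inr (Or.inr (Or.inl rfl))⟩
  let g : Fin 4 → ↥T₀ := ![A, B, C, D]
  have hval : ∀ i : Fin 4, ((g i : Fin (2 * (n + 1))) : ℕ) =
      ![2 * k - 2, 2 * k - 1, 2 * k + 1, 2 * k] i := by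
    intro i; fin_cases i <;> rfl
  have hginj : Function.Injective g := by
    intro i j hij
    have := congrArg (fun z => ((z : ↥T₀) : Fin (2 * (n + 1))).val) hij
    rw [hval i, hval j] at this
    fin_cases i <;> fin_cases j <;> first | rfl | (exfalso; revert this; simp; try omega)
  have hgsurj : Function.Surjective g := by
    rintro ⟨x, hx⟩
    rcases hx with h | h | h | h
    · exact ⟨0, Subtype.ext (Fin.ext (by have := hval 0; simp at this ⊢; omega))⟩
    · exact ⟨1, Subtype.ext (Fin.ext (by have := hval 1; simp at this ⊢; omega))⟩
    · exact ⟨3, Subtype.ext (Fin.ext (by have := hval 3; simp at this ⊢; omega))⟩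
    · exact ⟨2, Subtype.ext (Fin.ext (by have := hval 2; simp at this ⊢; omega))⟩
  have hrel : ∀ i j : Fin 4, ((ladderGraph n).induce T₀).Adj (g i) (g j) ↔
      (cycleGraph 4).Adj i j := by
    intro i j
    have hL : ((ladderGraph n).induce T₀).Adj (g i) (g j) ↔
        (ladderGraph n).Adj (g i : Fin (2 * (n + 1))) (g j : Fin (2 * (n + 1))) := Iff.rfl
    rw [hL, ladder_adj', hval i, hval j, cycleGraph_adj]
    fin_cases i <;> fin_cases j <;>
      simp [Fin.ext_iff] <;>
      first
        | omega
        | exact iff_of_true (by omega) (by decide)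
        | exact iff_of_false (by omega) (by decide)
  exact ⟨RelIso.symm ⟨Equiv.ofBijective g ⟨hginj, hgsurj⟩, by
    intro i j
    exact hrel i j⟩⟩


lemma reach_lift {β : Sort*} {W : Type*} {H : SimpleGraph W} (f : W → β)
    (hf : ∀ a b, H.Adj a b → f a = f b) {a b : W} (r : H.Reachable a b) : f a = f b := by
  obtain ⟨p⟩ := r
  induction p with
  | nil => rfl
  | cons h _ ih => exact (hf _ _ h).trans ih

/-- inclusion hom -/
def inclHom (G : SimpleGraph V) (R : Set V) (v : V) :
    G.induce R →g G.induce (insert v R) where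
  toFun := fun x => ⟨x.1, Set.mem_insert_of_mem _ x.2⟩
  map_rel' := fun h => h

lemma cc_empty : Nat.card (G.induce (∅ : Set V)).ConnectedComponent = 0 := by
  have : IsEmpty (G.induce (∅ : Set V)).ConnectedComponent :=
    ⟨fun c => ConnectedComponent.ind (fun x => absurd x.2 (Set.notMem_empty _)) c⟩
  exact Nat.card_of_isEmpty

lemma cc_insert_isolated {R : Set V} {v : V} (hv : v ∉ R)
    (h : ∀ u ∈ R, ¬ G.Adj v u) :
    Nat.card (G.induce (insert v R)).ConnectedComponent
      = Nat.card (G.induce R).ConnectedComponent + 1 := by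
  classical
  set f : ↥(insert v R) → (G.induce R).ConnectedComponent ⊕ Unit := fun x =>
    if h' : (x : V) = v then Sum.inr ()
    else Sum.inl ((G.induce R).connectedComponentMk ⟨x, (Set.mem_insert_iff.mp x.2).resolve_left h'⟩)
    with hfdef
  have hf : ∀ a b, (G.induce (insert v R)).Adj a b → f a = f b := by
    rintro ⟨a, ha⟩ ⟨b, hb⟩ hab
    have hab' : G.Adj a b := hab
    by_cases h1 : a = v
    · subst h1
      have hbv : b ≠ a := hab'.ne'
      exact absurd hab' (h b ((Set.mem_insert_iff.mp hb).resolve_left hbv))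
    by_cases h2 : b = v
    · subst h2
      exact absurd hab'.symm (h a ((Set.mem_insert_iff.mp ha).resolve_left h1))
    simp only [hfdef, dif_neg h1, dif_neg h2]
    exact congrArg Sum.inl (ConnectedComponent.sound (SimpleGraph.Adj.reachable hab'))
  let F : (G.induce (insert v R)).ConnectedComponent → (G.induce R).ConnectedComponent ⊕ Unit :=
    ConnectedComponent.lift f (fun a b p _ => reach_lift f hf ⟨p⟩)
  let g : (G.induce R).ConnectedComponent ⊕ Unit → (G.induce (insert v R)).ConnectedComponent :=
    Sum.elim (ConnectedComponent.map (inclHom G R v))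
      (fun _ => (G.induce (insert v R)).connectedComponentMk ⟨v, Set.mem_insert _ _⟩)
  have e : (G.induce (insert v R)).ConnectedComponent ≃ (G.induce R).ConnectedComponent ⊕ Unit := by
    refine ⟨F, g, ?_, ?_⟩
    · refine ConnectedComponent.ind (fun x => ?_)
      by_cases h1 : (x : V) = v
      · have : F ((G.induce (insert v R)).connectedComponentMk x) = Sum.inr () := by
          simp only [F, ConnectedComponent.lift_mk, hfdef, dif_pos h1]
        rw [this]
        exact congrArg _ (Subtype.ext h1.symm)
      · have : F ((G.induce (insert v R)).connectedComponentMk x)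
            = Sum.inl ((G.induce R).connectedComponentMk
                ⟨x, (Set.mem_insert_iff.mp x.2).resolve_left h1⟩) := by
          simp only [F, ConnectedComponent.lift_mk, hfdef, dif_neg h1]
        rw [this]
        exact congrArg _ (Subtype.ext rfl)
    · rintro (c | u)
      · refine ConnectedComponent.ind (fun x => ?_) c
        have hxv : (x : V) ≠ v := fun hc => hv (hc ▸ x.2)
        simp only [g, Sum.elim_inl, ConnectedComponent.map_mk, F, ConnectedComponent.lift_mk,
          hfdef, inclHom]
        split_ifs with hcond
        · exact absurd hcond hxv
        · exact congrArg Sum.inl (congrArg _ (Subtype.ext rfl))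
      · simp only [g, Sum.elim_inr, F, ConnectedComponent.lift_mk, hfdef, dif_pos rfl]
  rw [Nat.card_congr e, Nat.card_sum]
  simp

lemma cc_insert_pendant {R : Set V} {v u₀ : V} (hv : v ∉ R) (hu₀ : u₀ ∈ R)
    (hadj : G.Adj v u₀)
    (h : ∀ w (hw : w ∈ R), G.Adj v w →
      (G.induce R).Reachable ⟨w, hw⟩ ⟨u₀, hu₀⟩) :
    Nat.card (G.induce (insert v R)).ConnectedComponent
      = Nat.card (G.induce R).ConnectedComponent := by
  classical
  set f : ↥(insert v R) → (G.induce R).ConnectedComponent := fun x =>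
    if h' : (x : V) = v then (G.induce R).connectedComponentMk ⟨u₀, hu₀⟩
    else (G.induce R).connectedComponentMk ⟨x, (Set.mem_insert_iff.mp x.2).resolve_left h'⟩
    with hfdef
  have hf : ∀ a b, (G.induce (insert v R)).Adj a b → f a = f b := by
    rintro ⟨a, ha⟩ ⟨b, hb⟩ hab
    have hab' : G.Adj a b := hab
    by_cases h1 : a = v
    · subst h1
      have hbv : b ≠ a := hab'.ne'
      have hbR : b ∈ R := (Set.mem_insert_iff.mp hb).resolve_left hbv
      simp only [hfdef, dif_pos rfl, dif_neg hbv]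
      exact (ConnectedComponent.sound (h b hbR hab')).symm
    by_cases h2 : b = v
    · subst h2
      have haR : a ∈ R := (Set.mem_insert_iff.mp ha).resolve_left h1
      simp only [hfdef, dif_pos rfl, dif_neg h1]
      exact ConnectedComponent.sound (h a haR hab'.symm)
    simp only [hfdef, dif_neg h1, dif_neg h2]
    exact ConnectedComponent.sound (SimpleGraph.Adj.reachable hab')
  let F : (G.induce (insert v R)).ConnectedComponent → (G.induce R).ConnectedComponent :=
    ConnectedComponent.lift f (fun a b p _ => reach_lift f hf ⟨p⟩)
  have e : (G.induce (insert v R)).ConnectedComponent ≃ (G.induce R).ConnectedComponent := by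
    refine ⟨F, ConnectedComponent.map (inclHom G R v), ?_, ?_⟩
    · refine ConnectedComponent.ind (fun x => ?_)
      by_cases h1 : (x : V) = v
      · have h2 : F ((G.induce (insert v R)).connectedComponentMk x)
            = (G.induce R).connectedComponentMk ⟨u₀, hu₀⟩ := by
          simp only [F, ConnectedComponent.lift_mk, hfdef, dif_pos h1]
        rw [h2]
        simp only [ConnectedComponent.map_mk, inclHom]
        refine ConnectedComponent.sound ?_
        refine SimpleGraph.Adj.reachable ?_
        show G.Adj u₀ x
        rw [h1]
        exact hadj.symm
      · have h2 : F ((G.induce (insert v R)).connectedComponentMk x)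
            = (G.induce R).connectedComponentMk
                ⟨x, (Set.mem_insert_iff.mp x.2).resolve_left h1⟩ := by
          simp only [F, ConnectedComponent.lift_mk, hfdef, dif_neg h1]
        rw [h2]
        simp only [ConnectedComponent.map_mk, inclHom]
        exact congrArg _ (Subtype.ext rfl)
    · refine ConnectedComponent.ind (fun x => ?_)
      have hxv : (x : V) ≠ v := fun hc => hv (hc ▸ x.2)
      simp only [ConnectedComponent.map_mk, inclHom, F, ConnectedComponent.lift_mk, hfdef]
      split_ifs with hcond
      · exact absurd hcond hxv
      · exact congrArg _ (Subtype.ext rfl)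
  exact Nat.card_congr e


def eSet (G : SimpleGraph V) (R : Set V) : Set (Sym2 V) :=
  {e | e ∈ G.edgeSet ∧ ∀ x ∈ e, x ∈ R}

lemma eSet_insert {R : Set V} {v : V} (hv : v ∉ R) :
    eSet G (insert v R) = eSet G R ∪ (fun u => s(v, u)) '' {u | u ∈ R ∧ G.Adj v u} := by
  ext e
  induction e with
  | _ a b =>
    constructor
    · rintro ⟨he, hmem⟩
      have hadj : G.Adj a b := he
      have ha := hmem a (Sym2.mem_mk_left a b)
      have hb := hmem b (Sym2.mem_mk_right a b)
      by_cases h1 : a = v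
      · subst h1
        have hbR : b ∈ R := (Set.mem_insert_iff.mp hb).resolve_left hadj.ne'
        exact Or.inr ⟨b, ⟨hbR, hadj⟩, rfl⟩
      by_cases h2 : b = v
      · subst h2
        have haR : a ∈ R := (Set.mem_insert_iff.mp ha).resolve_left hadj.ne
        exact Or.inr ⟨a, ⟨haR, hadj.symm⟩, Sym2.eq_swap⟩
      · refine Or.inl ⟨he, ?_⟩
        intro x hx
        rcases Sym2.mem_iff.mp hx with rfl | rfl
        · exact (Set.mem_insert_iff.mp ha).resolve_left h1
        · exact (Set.mem_insert_iff.mp hb).resolve_left h2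
    · rintro (⟨he, hmem⟩ | ⟨u, ⟨huR, hadj⟩, heq⟩)
      · exact ⟨he, fun x hx => Set.mem_insert_of_mem _ (hmem x hx)⟩
      · rw [← heq]
        refine ⟨hadj, ?_⟩
        intro x hx
        rcases Sym2.mem_iff.mp hx with rfl | rfl
        · exact Set.mem_insert _ _
        · exact Set.mem_insert_of_mem _ huR

lemma eSet_subset_aux {R : Set V} {v : V} (hv : v ∉ R) {u : V} :
    s(v, u) ∉ eSet G R := by
  rintro ⟨-, hmem⟩
  exact hv (hmem v (Sym2.mem_mk_left v u))

lemma eSet_ncard_zero {R : Set V} {v : V} (hv : v ∉ R)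
    (h : {u | u ∈ R ∧ G.Adj v u} = ∅) :
    (eSet G (insert v R)).ncard = (eSet G R).ncard := by
  rw [eSet_insert hv, h]
  simp

lemma eSet_ncard_one {R : Set V} {v u₀ : V} (hv : v ∉ R)
    (h : {u | u ∈ R ∧ G.Adj v u} = {u₀}) :
    (eSet G (insert v R)).ncard = (eSet G R).ncard + 1 := by
  rw [eSet_insert hv, h, Set.image_singleton, Set.union_singleton,
    Set.ncard_insert_of_notMem (eSet_subset_aux hv) (Set.toFinite _)]

lemma eSet_ncard_two {R : Set V} {v u₀ u₁ : V} (hv : v ∉ R) (hne : u₀ ≠ u₁)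
    (h : {u | u ∈ R ∧ G.Adj v u} = {u₀, u₁}) :
    (eSet G (insert v R)).ncard = (eSet G R).ncard + 2 := by
  have hu₁R : u₁ ∈ R := by
    have : u₁ ∈ ({u₀, u₁} : Set V) := Set.mem_insert_of_mem _ rfl
    rw [← h] at this; exact this.1
  have key : s(v, u₀) ≠ s(v, u₁) := by
    intro hc
    rcases Sym2.eq_iff.mp hc with ⟨-, h2⟩ | ⟨h1, -⟩
    · exact hne h2
    · exact hv (h1 ▸ hu₁R)
  rw [eSet_insert hv, h, Set.image_insert_eq, Set.image_singleton]
  rw [Set.union_comm, Set.insert_union, Set.singleton_union,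
    Set.ncard_insert_of_notMem (by
      rintro (hc | hc)
      · exact key (hc ▸ rfl)
      · exact eSet_subset_aux hv hc) (Set.toFinite _),
    Set.ncard_insert_of_notMem (eSet_subset_aux hv) (Set.toFinite _)]

def sqSet (G : SimpleGraph V) (R : Set V) : Set (Set V) :=
  {T | T ⊆ R ∧ Nonempty (G.induce T ≃g cycleGraph 4)}

lemma sq_card_eq (R : Set V) :
    Nat.card {T : Set V // T ⊆ R ∧ Nonempty (G.induce T ≃g cycleGraph 4)}
      = (sqSet G R).ncard := Nat.card_coe_set_eq _

lemma sq_insert_none {R : Set V} {v : V}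
    (h : ∀ T : Set V, T ⊆ insert v R → v ∈ T →
      Nonempty (G.induce T ≃g cycleGraph 4) → False) :
    sqSet G (insert v R) = sqSet G R := by
  ext T
  constructor
  · rintro ⟨hsub, hiso⟩
    have hvT : v ∉ T := fun hvT => h T hsub hvT hiso
    refine ⟨fun x hx => ((Set.mem_insert_iff.mp (hsub hx)).resolve_left
      (fun hc => hvT (hc ▸ hx))), hiso⟩
  · rintro ⟨hsub, hiso⟩
    exact ⟨hsub.trans (Set.subset_insert _ _), hiso⟩

lemma sq_insert_one {R : Set V} {v : V} (hv : v ∉ R) {T₀ : Set V}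
    (hT₀ : T₀ ⊆ insert v R) (hvT₀ : v ∈ T₀)
    (iso₀ : Nonempty (G.induce T₀ ≃g cycleGraph 4))
    (uniq : ∀ T : Set V, T ⊆ insert v R → v ∈ T →
      Nonempty (G.induce T ≃g cycleGraph 4) → T = T₀) :
    (sqSet G (insert v R)).ncard = (sqSet G R).ncard + 1 := by
  have hset : sqSet G (insert v R) = insert T₀ (sqSet G R) := by
    ext T
    constructor
    · rintro ⟨hsub, hiso⟩
      by_cases hvT : v ∈ T
      · exact Or.inl (uniq T hsub hvT hiso)
      · exact Or.inr ⟨fun x hx => ((Set.mem_insert_iff.mp (hsub hx)).resolve_left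
          (fun hc => hvT (hc ▸ hx))), hiso⟩
    · rintro (rfl | ⟨hsub, hiso⟩)
      · exact ⟨hT₀, iso₀⟩
      · exact ⟨hsub.trans (Set.subset_insert _ _), hiso⟩
  rw [hset, Set.ncard_insert_of_notMem (fun hc => hv (hc.1 hvT₀)) (Set.toFinite _)]


lemma add_isolated {R : Set V} {v : V} (hv : v ∉ R)
    (hnbr : {u | u ∈ R ∧ G.Adj v u} = ∅) :
    (eSet G (insert v R)).ncard = (eSet G R).ncard
    ∧ (insert v R).ncard = R.ncard + 1
    ∧ Nat.card (G.induce (insert v R)).ConnectedComponent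
        = Nat.card (G.induce R).ConnectedComponent + 1 := by
  have hno : ∀ u ∈ R, ¬ G.Adj v u := by
    intro u hu hadj
    exact absurd (Set.eq_empty_iff_forall_notMem.mp hnbr u) (by simp [hu, hadj])
  exact ⟨eSet_ncard_zero hv hnbr, Set.ncard_insert_of_notMem hv (Set.toFinite _),
    cc_insert_isolated hv hno⟩

lemma add_pendant1 {R : Set V} {v u₀ : V} (hv : v ∉ R)
    (hnbr : {u | u ∈ R ∧ G.Adj v u} = {u₀}) :
    (eSet G (insert v R)).ncard = (eSet G R).ncard + 1
    ∧ (insert v R).ncard = R.ncard + 1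
    ∧ Nat.card (G.induce (insert v R)).ConnectedComponent
        = Nat.card (G.induce R).ConnectedComponent := by
  have hu₀ : u₀ ∈ R ∧ G.Adj v u₀ := by
    have : u₀ ∈ {u | u ∈ R ∧ G.Adj v u} := by rw [hnbr]; rfl
    exact this
  refine ⟨eSet_ncard_one hv hnbr, Set.ncard_insert_of_notMem hv (Set.toFinite _), ?_⟩
  refine cc_insert_pendant hv hu₀.1 hu₀.2 ?_
  intro w hw hadj
  have : w ∈ {u | u ∈ R ∧ G.Adj v u} := ⟨hw, hadj⟩
  rw [hnbr] at this
  cases this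
  exact Reachable.refl _

lemma add_pendant2 {R : Set V} {v u₀ u₁ : V} (hv : v ∉ R) (hne : u₀ ≠ u₁)
    (hnbr : {u | u ∈ R ∧ G.Adj v u} = {u₀, u₁})
    (hreach : ∀ (h₀ : u₀ ∈ R) (h₁ : u₁ ∈ R),
      (G.induce R).Reachable ⟨u₁, h₁⟩ ⟨u₀, h₀⟩) :
    (eSet G (insert v R)).ncard = (eSet G R).ncard + 2
    ∧ (insert v R).ncard = R.ncard + 1
    ∧ Nat.card (G.induce (insert v R)).ConnectedComponent
        = Nat.card (G.induce R).ConnectedComponent := by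
  have hu₀ : u₀ ∈ R ∧ G.Adj v u₀ := by
    have : u₀ ∈ {u | u ∈ R ∧ G.Adj v u} := by rw [hnbr]; exact Set.mem_insert _ _
    exact this
  have hu₁ : u₁ ∈ R ∧ G.Adj v u₁ := by
    have : u₁ ∈ {u | u ∈ R ∧ G.Adj v u} := by rw [hnbr]; exact Set.mem_insert_of_mem _ rfl
    exact this
  refine ⟨eSet_ncard_two hv hne hnbr, Set.ncard_insert_of_notMem hv (Set.toFinite _), ?_⟩
  refine cc_insert_pendant hv hu₀.1 hu₀.2 ?_
  intro w hw hadj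
  have hmem : w ∈ {u | u ∈ R ∧ G.Adj v u} := ⟨hw, hadj⟩
  rw [hnbr] at hmem
  rcases hmem with rfl | rfl
  · exact Reachable.refl _
  · exact hreach hu₀.1 hu₁.1

lemma eSet_empty : eSet G (∅ : Set V) = ∅ := by
  ext e
  induction e with
  | _ a b =>
    simp only [eSet, Set.mem_setOf_eq, Set.mem_empty_iff_false, iff_false, not_and]
    intro _ h
    exact (h a (Sym2.mem_mk_left a b)).elim

lemma sqSet_empty : sqSet G (∅ : Set V) = ∅ := by
  ext T
  simp only [sqSet, Set.mem_setOf_eq, Set.mem_empty_iff_false, iff_false, not_and]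
  rintro hsub ⟨e⟩
  have : IsEmpty ↥T := ⟨fun x => (hsub x.2).elim⟩
  exact (this.false (e.symm 0)).elim

theorem main_aux (n : ℕ) : ∀ k, k ≤ n + 1 → ∀ S : Set (Fin (2 * (n + 1))),
    (∀ x ∈ S, (x : ℕ) < 2 * k) →
    ((eSet (ladderGraph n) S).ncard : ℤ) - S.ncard
      + Nat.card ((ladderGraph n).induce S).ConnectedComponent
      = (sqSet (ladderGraph n) S).ncard := by
  intro k
  induction k with
  | zero =>
    intro _ S hS
    have hSe : S = ∅ :=
      Set.eq_empty_iff_forall_notMem.mpr (fun x hx => by have := hS x hx; omega)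
    rw [hSe, eSet_empty, sqSet_empty, cc_empty]
    simp
  | succ k ih =>
    intro hk S hS
    have hkn : k ≤ n := by omega
    have hba : (2 : ℕ) * k < 2 * (n + 1) := by omega
    have hbb : (2 : ℕ) * k + 1 < 2 * (n + 1) := by omega
    set a : Fin (2 * (n + 1)) := ⟨2 * k, hba⟩ with hadef
    set b : Fin (2 * (n + 1)) := ⟨2 * k + 1, hbb⟩ with hbdef
    have hav : (a : ℕ) = 2 * k := rfl
    have hbv : (b : ℕ) = 2 * k + 1 := rfl
    set S' : Set (Fin (2 * (n + 1))) := S \ {a, b} with hS'def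
    have hS'mem : ∀ x : Fin (2 * (n + 1)), x ∈ S' ↔ x ∈ S ∧ x ≠ a ∧ x ≠ b := by
      intro x
      rw [hS'def, Set.mem_diff, Set.mem_insert_iff, Set.mem_singleton_iff]
      tauto
    have hS' : ∀ x ∈ S', (x : ℕ) < 2 * k := by
      intro x hx
      rw [hS'mem] at hx
      have h1 := hS x hx.1
      have h2 : (x : ℕ) ≠ 2 * k := fun hc => hx.2.1 (Fin.ext hc)
      have h3 : (x : ℕ) ≠ 2 * k + 1 := fun hc => hx.2.2 (Fin.ext hc)
      omega
    have haS' : a ∉ S' := fun hc => ((hS'mem a).mp hc).2.1 rfl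
    have hbS' : b ∉ S' := fun hc => ((hS'mem b).mp hc).2.2 rfl
    have IH := ih (by omega) S' hS'
    -- adjacency helpers
    have hadj_ab : (ladderGraph n).Adj a b := by
      rw [ladder_adj']; omega
    by_cases haS : a ∈ S <;> by_cases hbS : b ∈ S
    · -- both a and b in S
      have hSeq : S = insert b (insert a S') := by
        ext x
        simp only [Set.mem_insert_iff, hS'mem]
        constructor
        · intro hx
          by_cases h1 : x = b
          · exact Or.inl h1
          by_cases h2 : x = a
          · exact Or.inr (Or.inl h2)
          · exact Or.inr (Or.inr ⟨hx, h2, h1⟩)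
        · rintro (rfl | rfl | ⟨h, -, -⟩) <;> assumption
      by_cases hp : ∃ u ∈ S', (u : ℕ) + 2 = 2 * k
      · -- previous even vertex present : add a (pendant on u₀), then b
        obtain ⟨u₀, hu₀S, hu₀v⟩ := hp
        have hnbrA : {u | u ∈ S' ∧ (ladderGraph n).Adj a u} = {u₀} := by
          ext u
          simp only [Set.mem_setOf_eq, Set.mem_singleton_iff]
          constructor
          · rintro ⟨huS, hadj⟩
            rw [ladder_adj'] at hadj
            have hub := hS' u huS
            exact Fin.ext (by omega)
          · rintro rfl
            refine ⟨hu₀S, ?_⟩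
            rw [ladder_adj']; omega
        obtain ⟨hE1, hV1, hC1⟩ := add_pendant1 haS' hnbrA
        have hq1 : sqSet (ladderGraph n) (insert a S') = sqSet (ladderGraph n) S' := by
          refine sq_insert_none ?_
          rintro T hsub hmem ⟨e⟩
          have hbound : ∀ x ∈ T, (x : ℕ) < 2 * k + 2 := by
            intro x hx
            rcases Set.mem_insert_iff.mp (hsub hx) with rfl | hxS'
            · omega
            · have := hS' x hxS'; omega
          obtain ⟨⟨x, hxT, hxv⟩, -⟩ := classify_even hbound hav hmem e
          rcases Set.mem_insert_iff.mp (hsub hxT) with rfl | hxS'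
          · omega
          · have := hS' x hxS'; omega
        have hbR1 : b ∉ insert a S' := by
          rw [Set.mem_insert_iff]
          rintro (hc | hc)
          · exact absurd (congrArg Fin.val hc) (by omega)
          · exact hbS' hc
        have hboundR1 : ∀ x ∈ insert a S', (x : ℕ) < 2 * k + 1 := by
          intro x hx
          rcases Set.mem_insert_iff.mp hx with rfl | hxS'
          · omega
          · have := hS' x hxS'; omega
        by_cases hq : ∃ u ∈ S', (u : ℕ) + 1 = 2 * k
        · -- square completed
          obtain ⟨u₁, hu₁S, hu₁v⟩ := hq
          have hadj_bu₁ : (ladderGraph n).Adj b u₁ := by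
            rw [ladder_adj']; omega
          have hnbrB : {u | u ∈ insert a S' ∧ (ladderGraph n).Adj b u} = {a, u₁} := by
            ext u
            simp only [Set.mem_setOf_eq, Set.mem_insert_iff, Set.mem_singleton_iff]
            constructor
            · rintro ⟨(rfl | huS), hadj⟩
              · exact Or.inl rfl
              · rw [ladder_adj'] at hadj
                have hub := hS' u huS
                exact Or.inr (Fin.ext (by omega))
            · rintro (rfl | rfl)
              · exact ⟨Or.inl rfl, hadj_ab.symm⟩
              · exact ⟨Or.inr hu₁S, hadj_bu₁⟩
          have hne_au₁ : a ≠ u₁ := by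
            intro hc
            have := congrArg Fin.val hc
            omega
          have hreach : ∀ (h₀ : a ∈ insert a S') (h₁ : u₁ ∈ insert a S'),
              ((ladderGraph n).induce (insert a S')).Reachable ⟨u₁, h₁⟩ ⟨a, h₀⟩ := by
            intro h₀ h₁
            have hu₀R : u₀ ∈ insert a S' := Set.mem_insert_of_mem _ hu₀S
            have had1 : ((ladderGraph n).induce (insert a S')).Adj ⟨u₁, h₁⟩ ⟨u₀, hu₀R⟩ := by
              show (ladderGraph n).Adj u₁ u₀
              rw [ladder_adj']; omega
            have had2 : ((ladderGraph n).induce (insert a S')).Adj ⟨u₀, hu₀R⟩ ⟨a, h₀⟩ := by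
              show (ladderGraph n).Adj u₀ a
              rw [ladder_adj']; omega
            exact had1.reachable.trans had2.reachable
          obtain ⟨hE2, hV2, hC2⟩ := add_pendant2 hbR1 hne_au₁ hnbrB hreach
          -- the unique new square
          set T₀ : Set (Fin (2 * (n + 1))) :=
            {x | (x : ℕ) + 2 = 2 * k ∨ (x : ℕ) + 1 = 2 * k ∨ (x : ℕ) = 2 * k
              ∨ (x : ℕ) = 2 * k + 1} with hT₀def
          have hk1 : 1 ≤ k := by omega
          have hT₀sub : T₀ ⊆ insert b (insert a S') := by
            intro x hx
            rcases hx with h | h | h | h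
            · have : x = u₀ := Fin.ext (by omega)
              exact this ▸ Set.mem_insert_of_mem _ (Set.mem_insert_of_mem _ hu₀S)
            · have : x = u₁ := Fin.ext (by omega)
              exact this ▸ Set.mem_insert_of_mem _ (Set.mem_insert_of_mem _ hu₁S)
            · have : x = a := Fin.ext (by omega)
              exact this ▸ Set.mem_insert_of_mem _ (Set.mem_insert _ _)
            · have : x = b := Fin.ext (by omega)
              exact this ▸ Set.mem_insert _ _
          have hbT₀ : b ∈ T₀ := Or.inr (Or.inr (Or.inr rfl))
          have hq2 : (sqSet (ladderGraph n) (insert b (insert a S'))).ncard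
              = (sqSet (ladderGraph n) (insert a S')).ncard + 1 := by
            refine sq_insert_one hbR1 hT₀sub hbT₀ (square_iso hk1 hkn) ?_
            rintro T hsub hmem ⟨e⟩
            have hbound : ∀ x ∈ T, (x : ℕ) < 2 * k + 2 := by
              intro x hx
              rcases Set.mem_insert_iff.mp (hsub hx) with rfl | hxR
              · omega
              · have := hboundR1 x hxR; omega
            obtain ⟨-, hfwd, hrev⟩ := classify_odd hbound hbv hmem e
            ext x
            constructor
            · exact fun hx => hfwd x hx
            · exact fun hx => hrev x hx
          rw [hSeq, hE2, hE1, hV2, hV1, hC2, hC1, hq2, hq1]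
          push_cast
          omega
        · -- no 2k-1 : b pendant on a only
          have hnbrB : {u | u ∈ insert a S' ∧ (ladderGraph n).Adj b u} = {a} := by
            ext u
            simp only [Set.mem_setOf_eq, Set.mem_singleton_iff]
            constructor
            · rintro ⟨hmem, hadj⟩
              rcases Set.mem_insert_iff.mp hmem with rfl | huS
              · rfl
              · rw [ladder_adj'] at hadj
                have hub := hS' u huS
                exact absurd ⟨u, huS, by omega⟩ hq
            · rintro rfl
              exact ⟨Set.mem_insert _ _, hadj_ab.symm⟩
          obtain ⟨hE2, hV2, hC2⟩ := add_pendant1 hbR1 hnbrB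
          have hq2 : sqSet (ladderGraph n) (insert b (insert a S'))
              = sqSet (ladderGraph n) (insert a S') := by
            refine sq_insert_none ?_
            rintro T hsub hmem ⟨e⟩
            have hbound : ∀ x ∈ T, (x : ℕ) < 2 * k + 2 := by
              intro x hx
              rcases Set.mem_insert_iff.mp (hsub hx) with rfl | hxR
              · omega
              · have := hboundR1 x hxR; omega
            obtain ⟨hk1, -, hrev⟩ := classify_odd hbound hbv hmem e
            have hx1b : (2 : ℕ) * k - 1 < 2 * (n + 1) := by omega
            have hxT : (⟨2 * k - 1, hx1b⟩ : Fin (2 * (n + 1))) ∈ T := by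
              refine hrev _ (Or.inr (Or.inl ?_))
              show 2 * k - 1 + 1 = 2 * k
              omega
            rcases Set.mem_insert_iff.mp (hsub hxT) with hc | hc
            · have := congrArg Fin.val hc
              simp only [Fin.val_mk] at this
              omega
            rcases Set.mem_insert_iff.mp hc with hc' | hc'
            · have := congrArg Fin.val hc'
              simp only [Fin.val_mk] at this
              omega
            · exact hq ⟨_, hc', by show 2 * k - 1 + 1 = 2 * k; omega⟩
          rw [hSeq, hE2, hE1, hV2, hV1, hC2, hC1, hq2, hq1]
          push_cast
          omega
      · -- no previous even vertex : add b first, then a pendant on b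
        have hnbrB : {u | u ∈ S' ∧ (ladderGraph n).Adj b u}
            = {u | u ∈ S' ∧ (u : ℕ) + 1 = 2 * k} := by
          ext u
          simp only [Set.mem_setOf_eq]
          refine and_congr_right (fun huS => ?_)
          rw [ladder_adj']
          have hub := hS' u huS
          omega
        have hq1 : sqSet (ladderGraph n) (insert b S') = sqSet (ladderGraph n) S' := by
          refine sq_insert_none ?_
          rintro T hsub hmem ⟨e⟩
          have hbound : ∀ x ∈ T, (x : ℕ) < 2 * k + 2 := by
            intro x hx
            rcases Set.mem_insert_iff.mp (hsub hx) with rfl | hxS'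
            · omega
            · have := hS' x hxS'; omega
          obtain ⟨hk1, -, hrev⟩ := classify_odd hbound hbv hmem e
          have hx0b : (2 : ℕ) * k - 2 < 2 * (n + 1) := by omega
          have hxT : (⟨2 * k - 2, hx0b⟩ : Fin (2 * (n + 1))) ∈ T := by
            refine hrev _ (Or.inl ?_)
            show 2 * k - 2 + 2 = 2 * k
            omega
          rcases Set.mem_insert_iff.mp (hsub hxT) with hc | hc
          · have := congrArg Fin.val hc
            simp only [Fin.val_mk] at this
            omega
          · exact hp ⟨_, hc, by show 2 * k - 2 + 2 = 2 * k; omega⟩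
        have haR1 : a ∉ insert b S' := by
          rw [Set.mem_insert_iff]
          rintro (hc | hc)
          · exact absurd (congrArg Fin.val hc) (by omega)
          · exact haS' hc
        have hnbrA2 : {u | u ∈ insert b S' ∧ (ladderGraph n).Adj a u} = {b} := by
          ext u
          simp only [Set.mem_setOf_eq, Set.mem_singleton_iff]
          constructor
          · rintro ⟨hmem, hadj⟩
            rcases Set.mem_insert_iff.mp hmem with rfl | huS
            · rfl
            · rw [ladder_adj'] at hadj
              have hub := hS' u huS
              exact absurd ⟨u, huS, by omega⟩ hp
          · rintro rfl
            exact ⟨Set.mem_insert _ _, hadj_ab⟩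
        obtain ⟨hE2, hV2, hC2⟩ := add_pendant1 haR1 hnbrA2
        have hq2 : sqSet (ladderGraph n) (insert a (insert b S'))
            = sqSet (ladderGraph n) (insert b S') := by
          refine sq_insert_none ?_
          rintro T hsub hmem ⟨e⟩
          have hbound : ∀ x ∈ T, (x : ℕ) < 2 * k + 2 := by
            intro x hx
            rcases Set.mem_insert_iff.mp (hsub hx) with rfl | hxR
            · omega
            rcases Set.mem_insert_iff.mp hxR with rfl | hxS'
            · omega
            · have := hS' x hxS'; omega
          obtain ⟨-, ⟨y, hyT, hyv⟩⟩ := classify_even hbound hav hmem e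
          rcases Set.mem_insert_iff.mp (hsub hyT) with rfl | hyR
          · omega
          rcases Set.mem_insert_iff.mp hyR with rfl | hyS'
          · omega
          · exact hp ⟨y, hyS', hyv⟩
        have hSeq2 : S = insert a (insert b S') := by
          ext x
          simp only [Set.mem_insert_iff, hS'mem]
          constructor
          · intro hx
            by_cases h1 : x = a
            · exact Or.inl h1
            by_cases h2 : x = b
            · exact Or.inr (Or.inl h2)
            · exact Or.inr (Or.inr ⟨hx, h1, h2⟩)
          · rintro (rfl | rfl | ⟨h, -, -⟩) <;> assumption
        by_cases hq : ∃ u ∈ S', (u : ℕ) + 1 = 2 * k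
        · obtain ⟨u₁, hu₁S, hu₁v⟩ := hq
          have hnbrB1 : {u | u ∈ S' ∧ (ladderGraph n).Adj b u} = {u₁} := by
            rw [hnbrB]
            ext u
            simp only [Set.mem_setOf_eq, Set.mem_singleton_iff]
            constructor
            · rintro ⟨huS, hv⟩
              exact Fin.ext (by omega)
            · rintro rfl
              exact ⟨hu₁S, hu₁v⟩
          obtain ⟨hE1, hV1, hC1⟩ := add_pendant1 hbS' hnbrB1
          rw [hSeq2, hE2, hE1, hV2, hV1, hC2, hC1, hq2, hq1]
          push_cast
          omega
        · have hnbrB0 : {u | u ∈ S' ∧ (ladderGraph n).Adj b u} = ∅ := by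
            rw [hnbrB]
            ext u
            simp only [Set.mem_setOf_eq, Set.mem_empty_iff_false, iff_false, not_and]
            intro huS hv
            exact hq ⟨u, huS, hv⟩
          obtain ⟨hE1, hV1, hC1⟩ := add_isolated hbS' hnbrB0
          rw [hSeq2, hE2, hE1, hV2, hV1, hC2, hC1, hq2, hq1]
          push_cast
          omega
    · -- a ∈ S, b ∉ S
      have hSeq : S = insert a S' := by
        ext x
        simp only [Set.mem_insert_iff, hS'mem]
        constructor
        · intro hx
          by_cases h1 : x = a
          · exact Or.inl h1
          · exact Or.inr ⟨hx, h1, fun hc => hbS (hc ▸ hx)⟩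
        · rintro (rfl | ⟨h, -, -⟩) <;> assumption
      have hnbrA : {u | u ∈ S' ∧ (ladderGraph n).Adj a u}
          = {u | u ∈ S' ∧ (u : ℕ) + 2 = 2 * k} := by
        ext u
        simp only [Set.mem_setOf_eq]
        refine and_congr_right (fun huS => ?_)
        rw [ladder_adj']
        have hub := hS' u huS
        omega
      have hq1 : sqSet (ladderGraph n) (insert a S') = sqSet (ladderGraph n) S' := by
        refine sq_insert_none ?_
        rintro T hsub hmem ⟨e⟩
        have hbound : ∀ x ∈ T, (x : ℕ) < 2 * k + 2 := by
          intro x hx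
          rcases Set.mem_insert_iff.mp (hsub hx) with rfl | hxS'
          · omega
          · have := hS' x hxS'; omega
        obtain ⟨⟨x, hxT, hxv⟩, -⟩ := classify_even hbound hav hmem e
        rcases Set.mem_insert_iff.mp (hsub hxT) with rfl | hxS'
        · omega
        · have := hS' x hxS'; omega
      by_cases hp : ∃ u ∈ S', (u : ℕ) + 2 = 2 * k
      · obtain ⟨u₀, hu₀S, hu₀v⟩ := hp
        have hnbrA1 : {u | u ∈ S' ∧ (ladderGraph n).Adj a u} = {u₀} := by
          rw [hnbrA]
          ext u
          simp only [Set.mem_setOf_eq, Set.mem_singleton_iff]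
          constructor
          · rintro ⟨huS, hv⟩
            exact Fin.ext (by omega)
          · rintro rfl
            exact ⟨hu₀S, hu₀v⟩
        obtain ⟨hE1, hV1, hC1⟩ := add_pendant1 haS' hnbrA1
        rw [hSeq, hE1, hV1, hC1, hq1]
        push_cast
        omega
      · have hnbrA0 : {u | u ∈ S' ∧ (ladderGraph n).Adj a u} = ∅ := by
          rw [hnbrA]
          ext u
          simp only [Set.mem_setOf_eq, Set.mem_empty_iff_false, iff_false, not_and]
          intro huS hv
          exact hp ⟨u, huS, hv⟩
        obtain ⟨hE1, hV1, hC1⟩ := add_isolated haS' hnbrA0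
        rw [hSeq, hE1, hV1, hC1, hq1]
        push_cast
        omega
    · -- a ∉ S, b ∈ S
      have hSeq : S = insert b S' := by
        ext x
        simp only [Set.mem_insert_iff, hS'mem]
        constructor
        · intro hx
          by_cases h1 : x = b
          · exact Or.inl h1
          · exact Or.inr ⟨hx, fun hc => haS (hc ▸ hx), h1⟩
        · rintro (rfl | ⟨h, -, -⟩) <;> assumption
      have hnbrB : {u | u ∈ S' ∧ (ladderGraph n).Adj b u}
          = {u | u ∈ S' ∧ (u : ℕ) + 1 = 2 * k} := by
        ext u
        simp only [Set.mem_setOf_eq]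
        refine and_congr_right (fun huS => ?_)
        rw [ladder_adj']
        have hub := hS' u huS
        omega
      have hq1 : sqSet (ladderGraph n) (insert b S') = sqSet (ladderGraph n) S' := by
        refine sq_insert_none ?_
        rintro T hsub hmem ⟨e⟩
        have hbound : ∀ x ∈ T, (x : ℕ) < 2 * k + 2 := by
          intro x hx
          rcases Set.mem_insert_iff.mp (hsub hx) with rfl | hxS'
          · omega
          · have := hS' x hxS'; omega
        obtain ⟨-, -, hrev⟩ := classify_odd hbound hbv hmem e
        have hxT : a ∈ T := hrev _ (Or.inr (Or.inr (Or.inl hav)))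
        rcases Set.mem_insert_iff.mp (hsub hxT) with hc | hc
        · exact absurd (congrArg Fin.val hc) (by omega)
        · have := hS' a hc; omega
      by_cases hq : ∃ u ∈ S', (u : ℕ) + 1 = 2 * k
      · obtain ⟨u₁, hu₁S, hu₁v⟩ := hq
        have hnbrB1 : {u | u ∈ S' ∧ (ladderGraph n).Adj b u} = {u₁} := by
          rw [hnbrB]
          ext u
          simp only [Set.mem_setOf_eq, Set.mem_singleton_iff]
          constructor
          · rintro ⟨huS, hv⟩
            exact Fin.ext (by omega)
          · rintro rfl
            exact ⟨hu₁S, hu₁v⟩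
        obtain ⟨hE1, hV1, hC1⟩ := add_pendant1 hbS' hnbrB1
        rw [hSeq, hE1, hV1, hC1, hq1]
        push_cast
        omega
      · have hnbrB0 : {u | u ∈ S' ∧ (ladderGraph n).Adj b u} = ∅ := by
          rw [hnbrB]
          ext u
          simp only [Set.mem_setOf_eq, Set.mem_empty_iff_false, iff_false, not_and]
          intro huS hv
          exact hq ⟨u, huS, hv⟩
        obtain ⟨hE1, hV1, hC1⟩ := add_isolated hbS' hnbrB0
        rw [hSeq, hE1, hV1, hC1, hq1]
        push_cast
        omega
    · -- neither
      have hSeq : S' = S := by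
        ext x
        rw [hS'mem]
        exact ⟨fun h => h.1, fun hx => ⟨hx, fun hc => haS (hc ▸ hx), fun hc => hbS (hc ▸ hx)⟩⟩
      rw [← hSeq]
      exact IH

/-- For any induced subgraph `Γ'` of `Q_n` (given by its vertex set
`S`), one has `|E(Γ')| − d(Γ') + r(Γ') = q(Γ')`, where `q(Γ')` is the number of
subsquares (induced 4-cycles) of `Γ'`. -/
theorem stmt5 (n : ℕ) (S : Set (Fin (2 * (n + 1)))) :
    (Set.ncard {e : Sym2 (Fin (2 * (n + 1))) |
        e ∈ (ladderGraph n).edgeSet ∧ ∀ v ∈ e, v ∈ S} : ℤ)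
      - S.ncard
      + Nat.card ((ladderGraph n).induce S).ConnectedComponent
      = Nat.card {T : Set (Fin (2 * (n + 1))) // T ⊆ S ∧
          Nonempty ((ladderGraph n).induce T ≃g SimpleGraph.cycleGraph 4)} := by
  have h := main_aux n (n + 1) le_rfl S (fun x _ => x.isLt)
  rw [sq_card_eq S]
  exact h
end

section
/- A finite simplicial graph is chordal (contains no induced cycle of length ≥ 4) if and only if it can be constructed recursively by pasting along complete subgraphs, starting from complete simplicial graphs. -/
/-- Induced subgraphs (given by their vertex sets) of an ambient graph `G` that can
be constructed recursively by pasting two proper induced subgraphs along a common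
complete subgraph (a clique), starting from complete graphs. -/
inductive CliquePastingConstructible {V : Type*} (G : SimpleGraph V) : Set V → Prop
  | complete (S : Set V) (h : G.IsClique S) : CliquePastingConstructible G S
  | paste (S₁ S₂ : Set V)
      (h₁ : CliquePastingConstructible G S₁) (h₂ : CliquePastingConstructible G S₂)
      (hproper₁ : S₁ ≠ S₁ ∪ S₂) (hproper₂ : S₂ ≠ S₁ ∪ S₂)
      (hclique : G.IsClique (S₁ ∩ S₂))
      (hcross : ∀ a ∈ S₁ \ S₂, ∀ b ∈ S₂ \ S₁, ¬ G.Adj a b) :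
      CliquePastingConstructible G (S₁ ∪ S₂)


namespace Stmt10Aux

open SimpleGraph
open Fin.CommRing

variable {V : Type*}


set_option linter.unusedVariables false in
/-- Restriction of a graph to a vertex set. -/
def restrictG (Γ : SimpleGraph V) (W : Set V) : SimpleGraph V where
  Adj x y := Γ.Adj x y ∧ x ∈ W ∧ y ∈ W
  symm := ⟨fun x y ⟨h, hx, hy⟩ => ⟨h.symm, hy, hx⟩⟩
  loopless := ⟨fun x ⟨h, _, _⟩ => Γ.irrefl h⟩

lemma restrictG_adj {Γ : SimpleGraph V} {W : Set V} {x y : V} :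
    (restrictG Γ W).Adj x y ↔ Γ.Adj x y ∧ x ∈ W ∧ y ∈ W := Iff.rfl

/-- getVert is injective on a path. -/
lemma getVert_inj {G : SimpleGraph V} {u v : V} (p : G.Walk u v) (hp : p.IsPath) :
    ∀ i ≤ p.length, ∀ j ≤ p.length, p.getVert i = p.getVert j → i = j := by
  induction p with
  | nil => intro i hi j hj _; simp only [Walk.length_nil, Nat.le_zero] at hi hj; omega
  | @cons a b c h q ih =>
    rw [Walk.cons_isPath_iff] at hp
    intro i hi j hj hij
    simp only [Walk.length_cons] at hi hj
    match i, j with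
    | 0, 0 => rfl
    | 0, (l+1) =>
      rw [Walk.getVert_zero, Walk.getVert_cons_succ] at hij
      exact absurd (Walk.mem_support_iff_exists_getVert.mpr ⟨l, hij.symm, by omega⟩) hp.2
    | (k+1), 0 =>
      rw [Walk.getVert_zero, Walk.getVert_cons_succ] at hij
      exact absurd (Walk.mem_support_iff_exists_getVert.mpr ⟨k, hij, by omega⟩) hp.2
    | (k+1), (l+1) =>
      rw [Walk.getVert_cons_succ, Walk.getVert_cons_succ] at hij
      have := ih hp.1 k (by omega) l (by omega) hij
      omega

/-- A prefix walk ending at `getVert i`. -/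
lemma exists_prefix {G : SimpleGraph V} {u v : V} (p : G.Walk u v) :
    ∀ i ≤ p.length, ∃ q : G.Walk u (p.getVert i), q.length = i := by
  induction p with
  | nil => intro i hi; simp only [Walk.length_nil, Nat.le_zero] at hi; subst hi
           exact ⟨Walk.nil, rfl⟩
  | @cons a b c h q ih =>
    intro i hi
    match i with
    | 0 => exact ⟨(Walk.nil.copy rfl (Walk.getVert_zero _).symm), rfl⟩
    | (k+1) =>
      simp only [Walk.length_cons] at hi
      obtain ⟨r, hr⟩ := ih k (by omega)
      exact ⟨(r.cons h).copy rfl (Walk.getVert_cons_succ _ _).symm, by simp [hr]⟩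

/-- A suffix walk starting at `getVert i`. -/
lemma exists_suffix {G : SimpleGraph V} {u v : V} (p : G.Walk u v) :
    ∀ i ≤ p.length, ∃ q : G.Walk (p.getVert i) v, q.length = p.length - i := by
  induction p with
  | nil => intro i hi; simp only [Walk.length_nil, Nat.le_zero] at hi; subst hi
           exact ⟨Walk.nil, rfl⟩
  | @cons a b c h q ih =>
    intro i hi
    match i with
    | 0 => exact ⟨(q.cons h).copy (Walk.getVert_zero _).symm rfl, by simp⟩
    | (k+1) =>
      simp only [Walk.length_cons] at hi ⊢
      obtain ⟨r, hr⟩ := ih k (by omega)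
      exact ⟨r.copy (Walk.getVert_cons_succ _ _).symm rfl, by simp [hr]⟩


lemma mod_succ_cases (m x : ℕ) (hx : x < m) :
    ((x+1) % m = x+1 ∧ x+1 < m) ∨ ((x+1) % m = 0 ∧ x+1 = m) := by
  rcases Nat.lt_or_ge (x+1) m with h | h
  · exact Or.inl ⟨Nat.mod_eq_of_lt h, h⟩
  · have : x + 1 = m := by omega
    exact Or.inr ⟨by rw [this, Nat.mod_self], this⟩

lemma cycle_adj_val {L : ℕ} (i j : Fin (L+2)) :
    (cycleGraph (L+2)).Adj i j ↔ (i.val = (j.val+1) % (L+2) ∨ j.val = (i.val+1) % (L+2)) := by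
  rw [cycleGraph_adj]
  constructor
  · rintro (h | h)
    · left
      have : i = j + 1 := by rw [← h]; ring
      rw [this, Fin.val_add, Fin.val_one]
    · right
      have : j = i + 1 := by rw [← h]; ring
      rw [this, Fin.val_add, Fin.val_one]
  · rintro (h | h)
    · left
      have : i = j + 1 := by
        apply Fin.ext; rw [h, Fin.val_add, Fin.val_one]
      rw [this]; ring
    · right
      have : j = i + 1 := by
        apply Fin.ext; rw [h, Fin.val_add, Fin.val_one]
      rw [this]; ring

lemma cycle_builder {Γ : SimpleGraph V} (L : ℕ) (hL : 2 ≤ L) (g : ℕ → V) (b : V)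
    (hinj : ∀ i ≤ L, ∀ j ≤ L, g i = g j → i = j)
    (hb : ∀ i ≤ L, b ≠ g i)
    (hadj : ∀ i ≤ L, ∀ j ≤ L, (Γ.Adj (g i) (g j) ↔ (j = i+1 ∨ i = j+1)))
    (hbadj : ∀ i ≤ L, (Γ.Adj b (g i) ↔ (i = 0 ∨ i = L))) :
    ∃ T : Set V, Nonempty (Γ.induce T ≃g cycleGraph (L+2)) := by
  set f : Fin (L+2) → V := fun i => if i.val = 0 then b else g (i.val - 1) with hf
  have hfval : ∀ i : Fin (L+2), (i.val = 0 ∧ f i = b) ∨ (1 ≤ i.val ∧ i.val - 1 ≤ L ∧ f i = g (i.val - 1)) := by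
    intro i
    by_cases h : i.val = 0
    · exact Or.inl ⟨h, by rw [hf]; exact if_pos h⟩
    · have := i.isLt
      exact Or.inr ⟨by omega, by omega, by rw [hf]; exact if_neg h⟩
  have hfinj : Function.Injective f := by
    intro i j hij
    rcases hfval i with ⟨h1, e1⟩ | ⟨h1, h1', e1⟩ <;> rcases hfval j with ⟨h2, e2⟩ | ⟨h2, h2', e2⟩
    · exact Fin.ext (by omega)
    · exact absurd (e1 ▸ e2 ▸ hij) (hb _ h2')
    · exact absurd (e1 ▸ e2 ▸ hij).symm (hb _ h1')
    · have := hinj _ h1' _ h2' (e1 ▸ e2 ▸ hij)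
      exact Fin.ext (by omega)
  have key : ∀ i j : Fin (L+2), Γ.Adj (f i) (f j) ↔ (cycleGraph (L+2)).Adj i j := by
    intro i j
    rw [cycle_adj_val]
    have hi := i.isLt
    have hj := j.isLt
    have mi := mod_succ_cases (L+2) i.val hi
    have mj := mod_succ_cases (L+2) j.val hj
    rcases hfval i with ⟨h1, e1⟩ | ⟨h1, h1', e1⟩ <;> rcases hfval j with ⟨h2, e2⟩ | ⟨h2, h2', e2⟩ <;>
      rw [e1, e2]
    · simp only [Γ.irrefl, false_iff]; omega
    · rw [hbadj _ h2']; omega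
    · rw [Γ.adj_comm, hbadj _ h1']; omega
    · rw [hadj _ h1' _ h2']; omega
  refine ⟨Set.range f, ⟨?_⟩⟩
  refine Iso.symm ⟨Equiv.ofInjective f hfinj, ?_⟩
  intro i j
  simp only [Equiv.ofInjective_apply, comap_adj, Function.Embedding.coe_subtype]
  exact key i j


lemma eq_m_of_mod_eq_zero {m x : ℕ} (h : x % m = 0) (h1 : 1 ≤ x) (h2 : x < 2*m) (hm : 1 ≤ m) :
    x = m := by
  rcases Nat.lt_or_ge x m with hh | hh
  · rw [Nat.mod_eq_of_lt hh] at h; omega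
  · rw [Nat.mod_eq_sub_mod hh, Nat.mod_eq_of_lt (by omega)] at h; omega

lemma eq_of_mod_eq {m a b : ℕ} (h : a % m = b % m) (hab : a ≤ b) (hlt : b - a < m) : a = b := by
  have hdvd : m ∣ b - a := (Nat.modEq_iff_dvd' hab).mp h
  have := Nat.eq_zero_of_dvd_of_lt hdvd
  omega

/-- Walking along a sequence of adjacent vertices from `P`-land to `Q`-land,
one must first cross `Z`. -/
lemma first_blocker {m : ℕ} (P Q Z : Fin m → Prop)
    (hcov : ∀ i, P i ∨ Q i ∨ Z i) (hdisj : ∀ i, P i → ¬ Q i)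
    (hedge : ∀ i j, (cycleGraph m).Adj i j → P i → ¬ Q j)
    (c : ℕ → Fin m) (hc : ∀ k, (cycleGraph m).Adj (c k) (c (k+1)))
    (d : ℕ) (h0 : P (c 0)) (hd : Q (c d)) :
    ∃ t, 1 ≤ t ∧ t ≤ d ∧ Z (c t) ∧ P (c (t-1)) := by
  classical
  have hex : ∃ t, t ≤ d ∧ ¬ P (c t) := ⟨d, le_rfl, fun h => hdisj _ h hd⟩
  set t := Nat.find hex with ht
  obtain ⟨htd, htnP⟩ := Nat.find_spec hex
  have hmin : ∀ s, s < t → s ≤ d → P (c s) := by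
    intro s hs hsd
    by_contra hP
    exact Nat.find_min hex hs ⟨hsd, hP⟩
  have ht1 : 1 ≤ t := by
    rcases Nat.eq_zero_or_pos t with h | h
    · exact absurd (by rw [h]; exact h0 : P (c t)) htnP
    · exact h
  have hPprev : P (c (t-1)) := hmin _ (by omega) (by omega)
  have hadj : (cycleGraph m).Adj (c (t-1)) (c t) := by
    have := hc (t-1)
    rwa [Nat.sub_add_cancel ht1] at this
  have hnQ : ¬ Q (c t) := hedge _ _ hadj hPprev
  rcases hcov (c t) with h | h | h
  · exact absurd h htnP
  · exact absurd h hnQ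
  · exact ⟨t, ht1, htd, h, hPprev⟩

/-- No partition of the vertices of a cycle (length ≥ 4) into `X ∪ Y ∪ Z` with
`X, Y` nonempty, no `X`–`Y` edges, and `Z` a clique. -/
lemma cycle_partition_absurd {m : ℕ} (hm : 4 ≤ m) (X Y Z : Fin m → Prop)
    (hcov : ∀ i, X i ∨ Y i ∨ Z i)
    (hXY : ∀ i, X i → ¬ Y i) (hXZ : ∀ i, X i → ¬ Z i) (hYZ : ∀ i, Y i → ¬ Z i)
    (hX : ∃ i, X i) (hY : ∃ i, Y i)
    (hedge : ∀ i j, (cycleGraph m).Adj i j → X i → ¬ Y j)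
    (hZclique : ∀ i j, Z i → Z j → i ≠ j → (cycleGraph m).Adj i j) : False := by
  obtain ⟨m', rfl⟩ : ∃ m', m = m' + 2 := ⟨m - 2, by omega⟩
  obtain ⟨u, hu⟩ := hX
  obtain ⟨w, hw⟩ := hY
  have hmpos : 0 < m' + 2 := by omega
  set c : Fin (m'+2) → ℕ → Fin (m'+2) := fun a t => ⟨(a.val + t) % (m'+2), Nat.mod_lt _ hmpos⟩
    with hcdef
  have hc0 : ∀ a : Fin (m'+2), c a 0 = a := by
    intro a; apply Fin.ext
    simp [hcdef, Nat.mod_eq_of_lt a.isLt]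
  have hcsucc : ∀ (a : Fin (m'+2)) (t : ℕ), c a (t+1) = c a t + 1 := by
    intro a t
    apply Fin.ext
    rw [Fin.val_add, Fin.val_one]
    show (a.val + (t+1)) % (m'+2) = ((a.val + t) % (m'+2) + 1) % (m'+2)
    conv_rhs => rw [Nat.mod_add_mod]
    rfl
  have hcadj : ∀ (a : Fin (m'+2)) (k : ℕ), (cycleGraph (m'+2)).Adj (c a k) (c a (k+1)) := by
    intro a k
    rw [cycleGraph_adj]
    right
    rw [hcsucc]
    ring
  have hcend : ∀ a b : Fin (m'+2), c a ((b - a).val) = b := by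
    intro a b
    have hcast : (((b - a).val : ℕ) : Fin (m'+2)) = b - a := Fin.cast_val_eq_self _
    calc c a ((b-a).val) = a + (((b - a).val : ℕ) : Fin (m'+2)) := by
          apply Fin.ext
          rw [Fin.val_add, Fin.val_natCast]
          show (a.val + (b-a).val) % (m'+2) = (a.val + (b-a).val % (m'+2)) % (m'+2)
          rw [Nat.add_mod_mod]
      _ = b := by rw [hcast]; ring
  set d := (w - u).val with hddef
  set d' := (u - w).val with hd'def
  have hune : u ≠ w := fun h => hXY u hu (h ▸ hw)
  have hd1 : 1 ≤ d := by
    rcases Nat.eq_zero_or_pos d with h | h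
    · exfalso
      have : w - u = 0 := by
        apply Fin.ext; rw [← hddef] at *; simp [h]
      exact hune (sub_eq_zero.mp this).symm
    · exact h
  have hd'1 : 1 ≤ d' := by
    rcases Nat.eq_zero_or_pos d' with h | h
    · exfalso
      have : u - w = 0 := by
        apply Fin.ext; rw [← hd'def] at *; simp [h]
      exact hune (sub_eq_zero.mp this)
    · exact h
  have hdd' : d + d' = m' + 2 := by
    have hz : (w - u) + (u - w) = (0 : Fin (m'+2)) := by ring
    have : (d + d') % (m'+2) = 0 := by
      have := congrArg Fin.val hz
      rwa [Fin.val_add] at this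
    exact eq_m_of_mod_eq_zero this (by omega) (by
      have h1 := (w - u).isLt
      have h2 := (u - w).isLt
      omega) (by omega)
  -- first blockers in both directions
  obtain ⟨t₁, ht11, ht1d, hZ1, hX1⟩ :=
    first_blocker X Y Z hcov hXY hedge (c u) (hcadj u) d
      (by rw [hc0]; exact hu) (by rw [hddef, hcend]; exact hw)
  obtain ⟨s, hs1, hsd', hZ2, hY2⟩ :=
    first_blocker Y X Z (fun i => by have := hcov i; tauto)
      (fun i hy hx => hXY i hx hy)
      (fun i j ha hy hx => hedge j i ha.symm hx hy)
      (c w) (hcadj w) d'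
      (by rw [hc0]; exact hw) (by rw [hd'def, hcend]; exact hu)
  set z₁ := c u t₁ with hz₁
  set z₂ := c w s with hz₂
  have hwval : w.val = (u.val + d) % (m'+2) := by
    have := congrArg Fin.val (hcend u w)
    rw [← hddef] at this
    exact this.symm
  have hz₂val : z₂.val = (u.val + (d + s)) % (m'+2) := by
    show (w.val + s) % (m'+2) = _
    rw [hwval, Nat.mod_add_mod, Nat.add_assoc]
  have hne : z₁ ≠ z₂ := by
    intro h
    have hv : (u.val + t₁) % (m'+2) = (u.val + (d + s)) % (m'+2) := by
      rw [← hz₂val, ← h]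
    have := eq_of_mod_eq hv (by omega) (by omega)
    omega
  have hadjz := hZclique z₁ z₂ hZ1 hZ2 hne
  rw [cycleGraph_adj] at hadjz
  rcases hadjz with h | h
  · -- z₁ = 1 + z₂, so z₂ = c u (t₁ - 1) ∈ X ∩ Z
    have h' : z₁ = 1 + z₂ := by rw [← h]; ring
    have hstep : c u (t₁-1) + 1 = z₁ := by
      rw [← hcsucc u (t₁-1), Nat.sub_add_cancel ht11]
    have : c u (t₁-1) = z₂ := by
      have : c u (t₁-1) + 1 = z₂ + 1 := by rw [hstep, h']; ring
      exact add_right_cancel this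
    exact hXZ _ hX1 (this ▸ hZ2)
  · -- z₂ = 1 + z₁, so z₁ = c w (s - 1) ∈ Y ∩ Z
    have h' : z₂ = 1 + z₁ := by rw [← h]; ring
    have hstep : c w (s-1) + 1 = z₂ := by
      rw [← hcsucc w (s-1), Nat.sub_add_cancel hs1]
    have : c w (s-1) = z₁ := by
      have : c w (s-1) + 1 = z₁ + 1 := by rw [hstep, h']; ring
      exact add_right_cancel this
    exact hYZ _ hY2 (this ▸ hZ1)

/-- Constructible sets contain no induced cycles of length ≥ 4. -/
lemma constructible_no_cycle {Γ : SimpleGraph V} {S : Set V}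
    (h : CliquePastingConstructible Γ S) :
    ∀ m : ℕ, 4 ≤ m → ∀ T : Set V, T ⊆ S → IsEmpty (Γ.induce T ≃g cycleGraph m) := by
  induction h with
  | complete S hS =>
    intro m hm T hT
    constructor
    intro e
    let i0 : Fin m := ⟨0, by omega⟩
    let i2 : Fin m := ⟨2, by omega⟩
    set v0 := e.symm i0 with hv0
    set v2 := e.symm i2 with hv2
    have hne : v0 ≠ v2 := by
      intro h
      have := e.symm.injective h
      simp only [i0, i2, Fin.mk.injEq] at this
      omega
    have hvne : (v0 : V) ≠ (v2 : V) := fun h => hne (Subtype.ext h)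
    have hadj : Γ.Adj v0 v2 := hS (hT v0.2) (hT v2.2) hvne
    have hiadj : (Γ.induce T).Adj v0 v2 := hadj
    have hcadj : (cycleGraph m).Adj i0 i2 := by
      have := e.map_rel_iff.mpr hiadj
      rwa [hv0, hv2, RelIso.apply_symm_apply, RelIso.apply_symm_apply] at this
    rw [cycleGraph_adj'] at hcadj
    have h1 : (i0 - i2).val = ((m - 2) + 0) % m := by rw [Fin.sub_def]
    have h2 : (i2 - i0).val = ((m - 0) + 2) % m := by rw [Fin.sub_def]
    rw [Nat.mod_eq_of_lt (by omega)] at h1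
    have h2' : ((m - 0) + 2) % m = 2 := by
      have : m - 0 + 2 = 2 + m := by omega
      rw [this, Nat.add_mod_right, Nat.mod_eq_of_lt (by omega)]
    rw [h2'] at h2
    omega
  | @paste S₁ S₂ h₁ h₂ hproper₁ hproper₂ hclique hcross ih₁ ih₂ =>
    intro m hm T hT
    constructor
    intro e
    by_cases hT1 : T ⊆ S₁
    · exact (ih₁ m hm T hT1).false e
    by_cases hT2 : T ⊆ S₂
    · exact (ih₂ m hm T hT2).false e
    obtain ⟨x, hxT, hxS1⟩ := Set.not_subset.mp hT1
    obtain ⟨y, hyT, hyS2⟩ := Set.not_subset.mp hT2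
    have hxm : x ∈ S₂ \ S₁ := ⟨(hT hxT).resolve_left hxS1, hxS1⟩
    have hym : y ∈ S₁ \ S₂ := ⟨(hT hyT).resolve_right hyS2, hyS2⟩
    set X : Fin m → Prop := fun i => (↑(e.symm i) : V) ∈ S₁ \ S₂ with hX
    set Y : Fin m → Prop := fun i => (↑(e.symm i) : V) ∈ S₂ \ S₁ with hY
    set Z : Fin m → Prop := fun i => (↑(e.symm i) : V) ∈ S₁ ∩ S₂ with hZ
    refine cycle_partition_absurd hm X Y Z ?_ ?_ ?_ ?_ ?_ ?_ ?_ ?_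
    · intro i
      have := hT (e.symm i).2
      simp only [hX, hY, hZ, Set.mem_diff, Set.mem_inter_iff]
      rcases this with h | h <;> tauto
    · intro i; simp only [hX, hY, Set.mem_diff]; tauto
    · intro i; simp only [hX, hZ, Set.mem_diff, Set.mem_inter_iff]; tauto
    · intro i; simp only [hY, hZ, Set.mem_diff, Set.mem_inter_iff]; tauto
    · exact ⟨e ⟨y, hyT⟩, by simp only [hX, RelIso.symm_apply_apply]; exact hym⟩
    · exact ⟨e ⟨x, hxT⟩, by simp only [hY, RelIso.symm_apply_apply]; exact hxm⟩
    · intro i j hadj hXi hYj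
      have : (Γ.induce T).Adj (e.symm i) (e.symm j) := e.symm.map_rel_iff.mpr hadj
      exact hcross _ hXi _ hYj this
    · intro i j hZi hZj hij
      have hvne : (↑(e.symm i) : V) ≠ ↑(e.symm j) :=
        fun h => hij (e.symm.injective (Subtype.ext h))
      have hadj : Γ.Adj ↑(e.symm i) ↑(e.symm j) := hclique hZi hZj hvne
      exact e.symm.map_rel_iff.mp (hadj : (Γ.induce T).Adj (e.symm i) (e.symm j))

/-- The clique-separator decomposition of a non-complete chordal graph. -/
lemma chordal_decomp (Γ : SimpleGraph V)
    (hch : ∀ m : ℕ, 4 ≤ m → ∀ T : Set V, IsEmpty (Γ.induce T ≃g cycleGraph m))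
    (S : Set V) (hnc : ¬ Γ.IsClique S) :
    ∃ S₁ S₂ : Set V, S₁ ∪ S₂ = S ∧ S₁ ⊂ S ∧ S₂ ⊂ S ∧ Γ.IsClique (S₁ ∩ S₂) ∧
      (∀ a ∈ S₁ \ S₂, ∀ b ∈ S₂ \ S₁, ¬ Γ.Adj a b) := by
  rw [SimpleGraph.isClique_iff, Set.Pairwise] at hnc
  push_neg at hnc
  obtain ⟨a, ha, b, hb, hab, hnadj⟩ := hnc
  set W : Set V := {x | x ∈ S ∧ ¬Γ.Adj b x ∧ x ≠ b} with hW
  have haW : a ∈ W := ⟨ha, fun h => hnadj h.symm, hab⟩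
  set G' := restrictG Γ W with hG'
  set A : Set V := {x | x ∈ W ∧ G'.Reachable a x} with hA
  set C : Set V := {x | x ∈ S ∧ x ∉ A ∧ ∃ y ∈ A, Γ.Adj x y} with hC
  have haA : a ∈ A := ⟨haW, Reachable.refl a⟩
  have hAS : A ⊆ S := fun x hx => hx.1.1
  have hCS : C ⊆ S := fun x hx => hx.1
  have keyC : ∀ x ∈ C, Γ.Adj b x ∧ x ≠ b := by
    rintro x ⟨hxS, hxA, y, hyA, hxy⟩
    have hbx : Γ.Adj b x := by
      by_contra hbx
      have hxb : x ≠ b := by rintro rfl; exact hyA.1.2.1 hxy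
      have hxW : x ∈ W := ⟨hxS, hbx, hxb⟩
      exact hxA ⟨hxW, hyA.2.trans (SimpleGraph.Adj.reachable ⟨hxy.symm, hyA.1, hxW⟩)⟩
    exact ⟨hbx, hbx.ne'⟩
  have hbA : b ∉ A := fun h => h.1.2.2 rfl
  have cliqueC : Γ.IsClique C := by
    intro u huC v hvC hne
    by_contra hnadj'
    obtain ⟨huS, huA, yu, hyuA, hadju⟩ := huC
    obtain ⟨hvS, hvA, yv, hyvA, hadjv⟩ := hvC
    have hbu : Γ.Adj b u := (keyC u ⟨huS, huA, yu, hyuA, hadju⟩).1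
    have hbv : Γ.Adj b v := (keyC v ⟨hvS, hvA, yv, hyvA, hadjv⟩).1
    set A' : Set V := A ∪ {u, v} with hA'
    set H := restrictG Γ A' with hH
    have huA' : u ∈ A' := Or.inr (Or.inl rfl)
    have hvA' : v ∈ A' := Or.inr (Or.inr rfl)
    have hAA' : A ⊆ A' := fun x hx => Or.inl hx
    -- every G'-walk starting in A stays in A, and transfers to H
    have walkA : ∀ {x z : V} (p : G'.Walk x z), x ∈ A → H.Reachable x z ∧ z ∈ A := by
      intro x z p
      induction p with
      | nil => exact fun hx => ⟨Reachable.refl _, hx⟩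
      | @cons x' y' z' h q ih =>
        intro hx
        have hyA : y' ∈ A := ⟨h.2.2, hx.2.trans (SimpleGraph.Adj.reachable h)⟩
        obtain ⟨hr, hz⟩ := ih hyA
        exact ⟨(SimpleGraph.Adj.reachable
          (⟨h.1, hAA' hx, hAA' hyA⟩ : H.Adj x' y')).trans hr, hz⟩
    have r2 : H.Reachable yu yv := by
      obtain ⟨p⟩ := hyuA.2.symm.trans hyvA.2
      exact (walkA p hyuA).1
    have reach : H.Reachable u v :=
      (SimpleGraph.Adj.reachable (⟨hadju, huA', hAA' hyuA⟩ : H.Adj u yu)).trans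
        (r2.trans (SimpleGraph.Adj.reachable (⟨hadjv, hvA', hAA' hyvA⟩ : H.Adj v yv)).symm)
    obtain ⟨p, hp, hlen⟩ := reach.exists_path_of_dist
    set L := p.length with hLdef
    have hmin : ∀ q : H.Walk u v, L ≤ q.length := fun q => hlen ▸ dist_le q
    have hL2 : 2 ≤ L := by
      rcases Nat.lt_or_ge L 2 with h | h
      · interval_cases L
        · exact absurd (p.eq_of_length_eq_zero hLdef.symm) hne
        · have := p.adj_getVert_succ (i := 0) (by omega)
          rw [p.getVert_zero] at this
          have h1 : p.getVert 1 = v := by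
            have := p.getVert_length
            rwa [← hLdef] at this
          rw [h1] at this
          exact absurd this.1 hnadj'
      · exact h
    have supportA' : ∀ i ≤ L, p.getVert i ∈ A' := by
      intro i hi
      rcases Nat.eq_zero_or_pos i with h | h
      · rw [h, p.getVert_zero]; exact huA'
      · have hadj := p.adj_getVert_succ (i := i - 1) (by omega)
        rw [Nat.sub_add_cancel h] at hadj
        exact hadj.2.2
    have hinj := getVert_inj p hp
    have interiorA : ∀ i, 0 < i → i < L → p.getVert i ∈ A := by
      intro i h0 hL
      rcases supportA' i (by omega) with h | h
      · exact h
      · exfalso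
        rcases h with h | h
        · have : p.getVert i = p.getVert 0 := by rw [p.getVert_zero]; exact h
          have := hinj i (by omega) 0 (by omega) this
          omega
        · have : p.getVert i = p.getVert L := by rw [p.getVert_length]; exact h
          have := hinj i (by omega) L (by omega) this
          omega
    have hadjchar : ∀ i ≤ L, ∀ j ≤ L,
        (Γ.Adj (p.getVert i) (p.getVert j) ↔ (j = i+1 ∨ i = j+1)) := by
      intro i hi j hj
      constructor
      · intro hadj
        have hHadj : H.Adj (p.getVert i) (p.getVert j) :=
          ⟨hadj, supportA' i hi, supportA' j hj⟩
        have hij : i ≠ j := by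
          intro h
          rw [h] at hadj
          exact Γ.irrefl hadj
        by_contra hcon
        push_neg at hcon
        rcases Nat.lt_or_ge i j with h | h
        · have hj2 : i + 2 ≤ j := by omega
          obtain ⟨q1, hq1⟩ := exists_prefix p i hi
          obtain ⟨q2, hq2⟩ := exists_suffix p j hj
          have := hmin (q1.append (q2.cons hHadj))
          rw [Walk.length_append, Walk.length_cons, hq1, hq2] at this
          omega
        · have hi2 : j + 2 ≤ i := by omega
          obtain ⟨q1, hq1⟩ := exists_prefix p j hj
          obtain ⟨q2, hq2⟩ := exists_suffix p i hi
          have := hmin (q1.append (q2.cons hHadj.symm))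
          rw [Walk.length_append, Walk.length_cons, hq1, hq2] at this
          omega
      · rintro (rfl | rfl)
        · exact (p.adj_getVert_succ (by omega)).1
        · exact (p.adj_getVert_succ (by omega)).1.symm
    have hbadjchar : ∀ i ≤ L, (Γ.Adj b (p.getVert i) ↔ (i = 0 ∨ i = L)) := by
      intro i hi
      constructor
      · intro h
        by_contra hcon
        push_neg at hcon
        have hint : p.getVert i ∈ A := interiorA i (by omega) (by omega)
        exact hint.1.2.1 h
      · rintro (rfl | rfl)
        · rw [p.getVert_zero]; exact hbu
        · rw [p.getVert_length]; exact hbv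
    have hbnot : ∀ i ≤ L, b ≠ p.getVert i := by
      intro i hi
      rcases Nat.eq_zero_or_pos i with h | h
      · rw [h, p.getVert_zero]; exact hbu.ne
      · rcases Nat.lt_or_ge i L with h' | h'
        · intro hbi
          exact (interiorA i h h').1.2.2 hbi.symm
        · have : i = L := by omega
          rw [this, p.getVert_length]; exact hbv.ne
    obtain ⟨T, ⟨e⟩⟩ := cycle_builder L hL2 p.getVert b hinj hbnot hadjchar hbadjchar
    exact (hch (L+2) (by omega) T).false e
  refine ⟨A ∪ C, S \ A, ?_, ?_, ?_, ?_, ?_⟩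
  · apply Set.Subset.antisymm
    · rintro x (h | h)
      · exact (Set.union_subset hAS hCS) h
      · exact h.1
    · intro x hx
      by_cases h : x ∈ A
      · exact Or.inl (Or.inl h)
      · exact Or.inr ⟨hx, h⟩
  · constructor
    · exact Set.union_subset hAS hCS
    · intro hsub
      have : b ∈ A ∪ C := hsub hb
      rcases this with h | h
      · exact hbA h
      · exact (keyC b h).2 rfl
  · constructor
    · exact Set.diff_subset
    · intro hsub
      exact (hsub ha).2 haA
  · apply cliqueC.subset
    rintro x ⟨h1, h2⟩
    rcases h1 with h | h
    · exact absurd h h2.2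
    · exact h
  · rintro x ⟨hx1, hx2⟩ y ⟨hy1, hy2⟩ hadj
    have hxA : x ∈ A := by
      rcases hx1 with h | h
      · exact h
      · exact absurd (by by_contra hA; exact hx2 ⟨hCS h, hA⟩ : x ∈ A) h.2.1
    have hyC : y ∈ C := ⟨hy1.1, fun h => hy2 (Or.inl h), x, hxA, hadj.symm⟩
    exact hy2 (Or.inr hyC)

end Stmt10Aux
/-- A finite simplicial graph is chordal (has no induced cycle of
length ≥ 4) if and only if it can be constructed recursively by pasting along
complete subgraphs, starting from complete simplicial graphs. -/
theorem stmt10 {V : Type*} [Fintype V] (Γ : SimpleGraph V) :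
    (∀ m : ℕ, 4 ≤ m → ∀ S : Set V,
        IsEmpty (Γ.induce S ≃g SimpleGraph.cycleGraph m)) ↔
      CliquePastingConstructible Γ Set.univ := by
  constructor
  · intro hch
    have key : ∀ (n : ℕ) (S : Set V), S.ncard ≤ n → CliquePastingConstructible Γ S := by
      intro n
      induction n with
      | zero =>
        intro S hS
        have hfin : S.Finite := Set.toFinite S
        have : S = ∅ := (Set.ncard_eq_zero hfin).mp (by omega)
        rw [this]
        exact .complete ∅ (by simp)
      | succ n ih =>
        intro S hS
        by_cases hc : Γ.IsClique S
        · exact .complete S hc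
        · obtain ⟨S₁, S₂, hun, hs1, hs2, hcl, hcr⟩ :=
            Stmt10Aux.chordal_decomp Γ (fun m hm T => hch m hm T) S hc
          have h₁ := ih S₁ (by have := Set.ncard_lt_ncard hs1 (Set.toFinite S); omega)
          have h₂ := ih S₂ (by have := Set.ncard_lt_ncard hs2 (Set.toFinite S); omega)
          have := CliquePastingConstructible.paste S₁ S₂ h₁ h₂
            (by rw [hun]; exact hs1.ne) (by rw [hun]; exact hs2.ne) hcl hcr
          rwa [hun] at this
    exact key (Set.univ.ncard) Set.univ le_rfl
  · intro hcon m hm S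
    exact Stmt10Aux.constructible_no_cycle hcon m hm S (Set.subset_univ S)
end

section
/- Let G be a pro-p group, H a closed subgroup, and suppose every open subgroup of G containing H is of p-absolute Galois type. If for every nonzero α ∈ H^1(H, Z/p) with N = Ker(α), every element β ∈ Ker(res^2_{H,N}) is the restriction of a class β_U ∈ H^2(U,Z/p) from some open subgroup U ⊇ H with res^2_{U,Ker(α_U)}(β_U) = 0 and α_U|_H = α, then β lies in the image of the cup product map c_α: H^1(H,Z/p) → H^2(H,Z/p). In particular, using that H^n(H,Z/p) = colim_{U ⊇ H open} H^n(U,Z/p), the sequence H^1(H) → H^2(H) → H^2(N) given by cup product with α and restriction is exact at H^2(H). -/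
/-- Let `H` be a closed subgroup of a pro-`p` group `G` such that
every open subgroup `U ⊇ H` is of `p`-absolute Galois type.  Fix a nonzero
`α ∈ H¹(H,ℤ/p)` with `N = Ker α`.  We model the relevant cohomology by linear data:
`A₁ = H¹(H)`, `A₂ = H²(H)`, `B₂ = H²(N)`, with `c = (− ∪ α) : A₁ → A₂` and the
restriction `res : A₂ → B₂`; and for each open subgroup `U ⊇ H` (indexed by `ι`)
spaces `A₁ᵤ = H¹(U)`, `A₂ᵤ = H²(U)`, `B₂ᵤ = H²(Ker α_U)` with cup `cᵤ = (− ∪ α_U)`,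
restriction `resᵤ`, and restriction-to-`H` maps `r₁ᵤ, r₂ᵤ, r₂Nᵤ` making the evident
squares commute (restriction commutes with cup products, using `α_U|_H = α`).
Assume each `U` is of `p`-absolute Galois type at `α_U` (`range cᵤ = ker resᵤ`),
that the sequence for `H` is a complex, that `H¹(H) = colim_U H¹(U)`
(every element of `A₁` is a restriction from some `U`), and that every
`β ∈ Ker(res)` is restricted from some class `β_U ∈ H²(U)` with `resᵤ β_U = 0`.
Then every `β ∈ Ker(res)` lies in `Img(c_α)`; in particular the sequence
`H¹(H) → H²(H) → H²(N)` is exact at `H²(H)`. -/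
theorem stmt16 (p : ℕ) [Fact p.Prime]
    (A₁ A₂ B₂ : Type*)
    [AddCommGroup A₁] [Module (ZMod p) A₁] [AddCommGroup A₂] [Module (ZMod p) A₂]
    [AddCommGroup B₂] [Module (ZMod p) B₂]
    (c : A₁ →ₗ[ZMod p] A₂) (res : A₂ →ₗ[ZMod p] B₂)
    (ι : Type*)
    (A₁U A₂U B₂U : ι → Type*)
    [∀ u, AddCommGroup (A₁U u)] [∀ u, Module (ZMod p) (A₁U u)]
    [∀ u, AddCommGroup (A₂U u)] [∀ u, Module (ZMod p) (A₂U u)]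
    [∀ u, AddCommGroup (B₂U u)] [∀ u, Module (ZMod p) (B₂U u)]
    (cU : ∀ u, A₁U u →ₗ[ZMod p] A₂U u)
    (resU : ∀ u, A₂U u →ₗ[ZMod p] B₂U u)
    (r₁ : ∀ u, A₁U u →ₗ[ZMod p] A₁)
    (r₂ : ∀ u, A₂U u →ₗ[ZMod p] A₂)
    (r₂N : ∀ u, B₂U u →ₗ[ZMod p] B₂)
    -- restriction commutes with cup product by `α_U` (since `α_U|_H = α`):
    (hsq₁ : ∀ u (x : A₁U u), r₂ u (cU u x) = c (r₁ u x))
    -- restriction to `N` commutes with restriction to `H`: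
    (hsq₂ : ∀ u (y : A₂U u), r₂N u (resU u y) = res (r₂ u y))
    -- every open `U ⊇ H` is of `p`-absolute Galois type (exactness at `H²(U)`):
    (hU : ∀ u, LinearMap.range (cU u) = LinearMap.ker (resU u))
    -- the sequence for `H` is a complex:
    (hcomplex : ∀ x : A₁, res (c x) = 0)
    -- `H¹(H) = colim_U H¹(U)`:
    (hcolim₁ : ∀ a : A₁, ∃ u : ι, ∃ a' : A₁U u, r₁ u a' = a)
    -- every class in `Ker(res)` comes from some `U` with vanishing restriction:
    (hcolim₂ : ∀ β : A₂, res β = 0 → ∃ u : ι, ∃ βU : A₂U u, r₂ u βU = β ∧ resU u βU = 0) :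
    (∀ β : A₂, res β = 0 → ∃ γ : A₁, c γ = β) ∧
    LinearMap.range c = LinearMap.ker res := by
  have main : ∀ β : A₂, res β = 0 → ∃ γ : A₁, c γ = β := by
    intro β hβ
    obtain ⟨u, βU, hr, hres⟩ := hcolim₂ β hβ
    have : βU ∈ LinearMap.ker (resU u) := hres
    rw [← hU u] at this
    obtain ⟨x, hx⟩ := this
    exact ⟨r₁ u x, by rw [← hsq₁, hx, hr]⟩
  refine ⟨main, le_antisymm ?_ ?_⟩
  · rintro _ ⟨x, rfl⟩; exact hcomplex x
  · rintro β hβ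
    obtain ⟨γ, hγ⟩ := main β hβ
    exact ⟨γ, hγ⟩
end
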